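/- arXiv:2412.20332 — 5 statements merged into one kernel-verified Lean document; each statement's English description precedes it below -/
import Mathlib

section
/- Let P be a polynomial over ℂ with factorization P = a·∏_{k=1}^m (x - r_k)^{μ_k} where the r_k are distinct and a ≠ 0. Then for every i ≥ 0, gcd(P^(0), P^(1), …, P^(i)) is associated to ∏_{k : μ_k > i} (x - r_k)^{μ_k - i}. -/
open Polynomial

private lemma rm_le_of_dvd' {p q : ℂ[X]} (hq : q ≠ 0) (h : p ∣ q) (z : ℂ) :
    rootMultiplicity z p ≤ rootMultiplicity z q :=
  (le_rootMultiplicity_iff hq).mpr ((pow_rootMultiplicity_dvd p z).trans h)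

private lemma rm_iter_deriv (p : ℂ[X]) (z : ℂ) :
    ∀ j, j ≤ rootMultiplicity z p →
      rootMultiplicity z (derivative^[j] p) = rootMultiplicity z p - j ∧
      (p ≠ 0 → derivative^[j] p ≠ 0) := by
  intro j
  induction j with
  | zero => intro _; simp
  | succ j ih =>
    intro hj
    obtain ⟨h1, h2⟩ := ih (by omega)
    have hp : p ≠ 0 := by
      intro h0; rw [h0, rootMultiplicity_zero] at hj; omega
    have hne : derivative^[j] p ≠ 0 := h2 hp
    have hpos : 0 < rootMultiplicity z (derivative^[j] p) := by omega
    have hroot : (derivative^[j] p).IsRoot z := (rootMultiplicity_pos hne).mp hpos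
    have hd : rootMultiplicity z (derivative (derivative^[j] p)) =
        rootMultiplicity z (derivative^[j] p) - 1 :=
      derivative_rootMultiplicity_of_root hroot
    rw [Function.iterate_succ_apply']
    refine ⟨by rw [hd, h1]; omega, fun _ h0 => ?_⟩
    have hdvd : (X - C z) ∣ derivative^[j] p := dvd_iff_isRoot.mpr hroot
    have hdeg : 1 ≤ (derivative^[j] p).natDegree := by
      have := natDegree_le_of_dvd hdvd hne
      simpa [natDegree_X_sub_C] using this
    have := natDegree_eq_zero_of_derivative_eq_zero h0
    omega

private lemma rm_prod {m : ℕ} (r : Fin m → ℂ) (c : Fin m → ℕ) (s : Finset (Fin m)) (z : ℂ) :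
    rootMultiplicity z (∏ k ∈ s, (X - C (r k)) ^ c k) =
      ∑ k ∈ s, if z = r k then c k else 0 := by
  have hmon : (∏ k ∈ s, (X - C (r k)) ^ c k).Monic :=
    monic_prod_of_monic _ _ fun k _ => (monic_X_sub_C _).pow _
  rw [← count_roots, roots_prod _ _ hmon.ne_zero, Multiset.count_bind]
  simp only [roots_pow, roots_X_sub_C, Multiset.count_nsmul, Multiset.count_singleton]
  rw [Finset.sum]
  congr 1
  apply Multiset.map_congr rfl
  intro k _
  by_cases h : z = r k <;> simp [h]

/-- For `P = a·∏ (x - r_k)^{μ_k}` with distinct `r_k` and `a ≠ 0`, for every `i ≥ 0`,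
`gcd(P⁽⁰⁾, …, P⁽ⁱ⁾)` is associated to `∏_{k : μ_k > i} (x - r_k)^{μ_k - i}`. -/
theorem stmt_1 {m : ℕ} (a : ℂ) (ha : a ≠ 0) (r : Fin m → ℂ) (hr : Function.Injective r)
    (μ : Fin m → ℕ) (hμ : ∀ k, 1 ≤ μ k) (P : ℂ[X])
    (hP : P = C a * ∏ k, (X - C (r k)) ^ μ k) :
    ∀ i : ℕ, Associated
      (Finset.gcd (Finset.range (i + 1)) (fun j => derivative^[j] P))
      (∏ k ∈ Finset.univ.filter (fun k => i < μ k), (X - C (r k)) ^ (μ k - i)) := by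
  have hPne : P ≠ 0 := by
    rw [hP]
    exact mul_ne_zero (C_ne_zero.mpr ha)
      (monic_prod_of_monic _ _ fun k _ => (monic_X_sub_C _).pow _).ne_zero
  have hμP : ∀ z, rootMultiplicity z P = ∑ k, if z = r k then μ k else 0 := by
    intro z
    rw [hP, ← count_roots, roots_C_mul _ ha, count_roots, rm_prod]
  have hrmk : ∀ k, rootMultiplicity (r k) P = μ k := by
    intro k
    rw [hμP]
    simp only [hr.eq_iff]
    rw [Finset.sum_ite_eq Finset.univ k (fun k => μ k)]
    simp
  intro i
  set Q := ∏ k ∈ Finset.univ.filter (fun k => i < μ k), (X - C (r k)) ^ (μ k - i) with hQ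
  set G := Finset.gcd (Finset.range (i + 1)) (fun j => derivative^[j] P) with hG
  have hGdvd : ∀ j, j ≤ i → G ∣ derivative^[j] P := fun j hj =>
    Finset.gcd_dvd (Finset.mem_range.mpr (by omega))
  have hGP : G ∣ P := by simpa using hGdvd 0 (Nat.zero_le i)
  apply associated_of_dvd_dvd
  · -- G ∣ Q
    have hGne : G ≠ 0 := fun h => hPne (by simpa [h] using hGP)
    apply (IsAlgClosed.splits G).dvd_of_roots_le_roots hGne
    rw [Multiset.le_iff_count]
    intro z
    rw [count_roots, count_roots]
    have hQz : rootMultiplicity z Q =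
        ∑ k ∈ Finset.univ.filter (fun k => i < μ k), if z = r k then μ k - i else 0 :=
      rm_prod r _ _ z
    by_cases hz : ∃ k, z = r k
    · obtain ⟨k, rfl⟩ := hz
      by_cases hik : i < μ k
      · have hle : i ≤ rootMultiplicity (r k) P := by rw [hrmk]; omega
        obtain ⟨h1, h2⟩ := rm_iter_deriv P (r k) i hle
        have hb : rootMultiplicity (r k) G ≤ μ k - i := by
          have := rm_le_of_dvd' (h2 hPne) (hGdvd i le_rfl) (r k)
          rw [h1, hrmk] at this
          omega
        have hQk : rootMultiplicity (r k) Q = μ k - i := by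
          rw [hQz]
          simp only [hr.eq_iff]
          rw [Finset.sum_ite_eq (Finset.univ.filter (fun k => i < μ k)) k
            (fun k => μ k - i)]
          simp [hik]
        omega
      · have hle : μ k ≤ rootMultiplicity (r k) P := by rw [hrmk]
        obtain ⟨h1, h2⟩ := rm_iter_deriv P (r k) (μ k) hle
        have hb : rootMultiplicity (r k) G ≤ 0 := by
          have := rm_le_of_dvd' (h2 hPne) (hGdvd (μ k) (by omega)) (r k)
          rw [h1, hrmk] at this
          omega
        omega
    · have hb : rootMultiplicity z G ≤ rootMultiplicity z P := rm_le_of_dvd' hPne hGP z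
      rw [hμP] at hb
      have : (∑ k, if z = r k then μ k else 0) = 0 := by
        apply Finset.sum_eq_zero
        intro k _
        simp only [ite_eq_right_iff]
        intro hzk
        exact absurd ⟨k, hzk⟩ hz
      omega
  · -- Q ∣ G
    apply Finset.dvd_gcd
    intro j hj
    rw [Finset.mem_range] at hj
    apply Finset.prod_dvd_of_coprime
    · intro k hk l hl hkl
      exact (isCoprime_X_sub_C_of_isUnit_sub
        (isUnit_iff_ne_zero.mpr (sub_ne_zero.mpr (fun h => hkl (hr h))))).pow
    · intro k hk
      rw [Finset.mem_filter] at hk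
      have hjm : j ≤ rootMultiplicity (r k) P := by rw [hrmk]; omega
      obtain ⟨h1, _⟩ := rm_iter_deriv P (r k) j hjm
      calc (X - C (r k)) ^ (μ k - i)
          ∣ (X - C (r k)) ^ rootMultiplicity (r k) (derivative^[j] P) :=
            pow_dvd_pow _ (by rw [h1, hrmk]; omega)
        _ ∣ derivative^[j] P := pow_rootMultiplicity_dvd _ _
end

section
/- Let P = a·∏_{k=1}^m (x - r_k)^{μ_k} over ℂ with the r_k distinct, and let Q = ∏_{k : μ_k > j} (x - r_k)^{μ_k - j} for some j ≥ 0. Then gcd(Q, Q') is associated to ∏_{k : μ_k > j+1} (x - r_k)^{μ_k - j - 1}. -/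
open Polynomial

private lemma rm_finset_prod {ι : Type*} (s : Finset ι) (f : ι → ℂ[X])
    (h : (∏ k ∈ s, f k) ≠ 0) (z : ℂ) :
    rootMultiplicity z (∏ k ∈ s, f k) = ∑ k ∈ s, rootMultiplicity z (f k) := by
  classical
  induction s using Finset.induction with
  | empty =>
      simp only [Finset.prod_empty, Finset.sum_empty]
      exact rootMultiplicity_eq_zero (by simp [IsRoot])
  | @insert k s hk ih =>
      rw [Finset.prod_insert hk] at h ⊢
      rw [rootMultiplicity_mul h, ih (right_ne_zero_of_mul h), Finset.sum_insert hk]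

private lemma rm_formula {m : ℕ} (r : Fin m → ℂ) (hr : Function.Injective r)
    (μ : Fin m → ℕ) (c : ℕ) (z : ℂ) :
    rootMultiplicity z
        (∏ k ∈ Finset.univ.filter (fun k => c < μ k), (X - C (r k)) ^ (μ k - c)) =
      ∑ k, if z = r k then μ k - c else 0 := by
  classical
  have hmon : (∏ k ∈ Finset.univ.filter (fun k => c < μ k),
      ((X : ℂ[X]) - C (r k)) ^ (μ k - c)).Monic :=
    monic_prod_of_monic _ _ fun k _ => (monic_X_sub_C _).pow _
  rw [rm_finset_prod _ _ hmon.ne_zero]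
  have hterm : ∀ k : Fin m, rootMultiplicity z (((X : ℂ[X]) - C (r k)) ^ (μ k - c)) =
      if z = r k then μ k - c else 0 := by
    intro k
    by_cases hzk : z = r k
    · rw [if_pos hzk, hzk, rootMultiplicity_X_sub_C_pow]
    · rw [if_neg hzk]
      refine rootMultiplicity_eq_zero ?_
      simp only [IsRoot, eval_pow, eval_sub, eval_X, eval_C]
      exact pow_ne_zero _ (sub_ne_zero.mpr hzk)
  rw [Finset.sum_congr rfl fun k _ => hterm k]
  refine Finset.sum_subset (Finset.filter_subset _ _) fun k _ hk => ?_
  simp only [Finset.mem_filter, Finset.mem_univ, true_and, not_lt] at hk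
  split_ifs with h
  · omega
  · rfl

private lemma rm_le_of_dvd {A B : ℂ[X]} (hB : B ≠ 0) (h : A ∣ B) (z : ℂ) :
    rootMultiplicity z A ≤ rootMultiplicity z B := by
  rw [← count_roots, ← count_roots]
  exact Multiset.le_iff_count.mp (roots.le_of_dvd hB h) z

private lemma dvd_of_rm_le {A B : ℂ[X]} (hA : A.Monic)
    (h : ∀ z, rootMultiplicity z A ≤ rootMultiplicity z B) : A ∣ B := by
  refine (IsAlgClosed.splits A).dvd_of_roots_le_roots hA.ne_zero ?_
  rw [Multiset.le_iff_count]
  intro z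
  rw [count_roots, count_roots]
  exact h z

/-- For `P = a·∏ (x - r_k)^{μ_k}` with distinct `r_k` and
`Q = ∏_{μ_k > j} (x - r_k)^{μ_k - j}`, the gcd of `Q` and `Q'` is associated to
`∏_{μ_k > j+1} (x - r_k)^{μ_k - j - 1}`. -/
theorem stmt_3 {m : ℕ} (a : ℂ) (ha : a ≠ 0) (r : Fin m → ℂ) (hr : Function.Injective r)
    (μ : Fin m → ℕ) (P : ℂ[X]) (hP : P = C a * ∏ k, (X - C (r k)) ^ μ k) (j : ℕ)
    (Q : ℂ[X])
    (hQ : Q = ∏ k ∈ Finset.univ.filter (fun k => j < μ k), (X - C (r k)) ^ (μ k - j)) :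
    Associated (gcd Q (derivative Q))
      (∏ k ∈ Finset.univ.filter (fun k => j + 1 < μ k), (X - C (r k)) ^ (μ k - (j + 1))) := by
  classical
  set D : ℂ[X] :=
    ∏ k ∈ Finset.univ.filter (fun k => j + 1 < μ k), (X - C (r k)) ^ (μ k - (j + 1)) with hD
  have hQm : Q.Monic := by
    rw [hQ]; exact monic_prod_of_monic _ _ fun k _ => (monic_X_sub_C _).pow _
  have hDm : D.Monic := by
    rw [hD]; exact monic_prod_of_monic _ _ fun k _ => (monic_X_sub_C _).pow _
  have hQrm : ∀ z, rootMultiplicity z Q = ∑ k, if z = r k then μ k - j else 0 := by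
    intro z; rw [hQ]; exact rm_formula r hr μ j z
  have hDrm : ∀ z, rootMultiplicity z D = ∑ k, if z = r k then μ k - (j + 1) else 0 := by
    intro z; rw [hD]; exact rm_formula r hr μ (j + 1) z
  have hpick : ∀ (e : Fin m → ℕ) (k₀ : Fin m),
      (∑ k, if r k₀ = r k then e k else 0) = e k₀ := by
    intro e k₀
    rw [Finset.sum_eq_single_of_mem k₀ (Finset.mem_univ _)]
    · rw [if_pos rfl]
    · intro k _ hkk
      exact if_neg fun h => hkk (hr h).symm
  have hrange : ∀ z : ℂ, (∀ k, z ≠ r k) → ∀ (e : Fin m → ℕ),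
      (∑ k, if z = r k then e k else 0) = 0 := by
    intro z hz e
    exact Finset.sum_eq_zero fun k _ => if_neg (hz k)
  by_cases hF : (Finset.univ.filter (fun k => j < μ k)).Nonempty
  · -- main case
    obtain ⟨k₀, hk₀⟩ := hF
    rw [Finset.mem_filter] at hk₀
    have hjk₀ : j < μ k₀ := hk₀.2
    have hQroot : Q.IsRoot (r k₀) := by
      have : 0 < rootMultiplicity (r k₀) Q := by
        rw [hQrm, hpick]; omega
      exact ((rootMultiplicity_pos hQm.ne_zero).mp this)
    have hdQ : 0 < Q.natDegree :=
      natDegree_pos_iff_degree_pos.mpr (degree_pos_of_root hQm.ne_zero hQroot)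
    have hQ'0 : derivative Q ≠ 0 := by
      intro h
      have := degree_derivative_eq Q hdQ
      rw [h, degree_zero] at this
      exact (by simp : (⊥ : WithBot ℕ) ≠ (↑(Q.natDegree - 1) : WithBot ℕ)) this
    -- root multiplicities of Q' at the roots r k (j < μ k)
    have hQ'rm : ∀ k : Fin m, j < μ k →
        rootMultiplicity (r k) (derivative Q) = μ k - (j + 1) := by
      intro k hk
      have hroot : Q.IsRoot (r k) := by
        have : 0 < rootMultiplicity (r k) Q := by rw [hQrm, hpick]; omega
        exact (rootMultiplicity_pos hQm.ne_zero).mp this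
      rw [derivative_rootMultiplicity_of_root hroot, hQrm, hpick]
      omega
    have hDQ : D ∣ Q := by
      refine dvd_of_rm_le hDm fun z => ?_
      rw [hQrm, hDrm]
      exact Finset.sum_le_sum fun k _ => by split_ifs <;> omega
    have hDQ' : D ∣ derivative Q := by
      refine dvd_of_rm_le hDm fun z => ?_
      by_cases hz : ∃ k, z = r k
      · obtain ⟨k, rfl⟩ := hz
        rw [hDrm, hpick]
        by_cases hk : j < μ k
        · rw [hQ'rm k hk]
        · omega
      · push_neg at hz
        rw [hDrm, hrange z hz]
        exact Nat.zero_le _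
    have hDG : D ∣ gcd Q (derivative Q) := dvd_gcd hDQ hDQ'
    have hG0 : gcd Q (derivative Q) ≠ 0 := by
      intro h
      exact hQm.ne_zero (zero_dvd_iff.mp (h ▸ gcd_dvd_left Q (derivative Q)))
    have hGm : (gcd Q (derivative Q)).Monic := by
      have := monic_normalize (p := gcd Q (derivative Q)) hG0
      rwa [normalize_gcd] at this
    have hGD : gcd Q (derivative Q) ∣ D := by
      refine dvd_of_rm_le hGm fun z => ?_
      by_cases hz : ∃ k, z = r k
      · obtain ⟨k, rfl⟩ := hz
        by_cases hk : j < μ k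
        · have h1 : rootMultiplicity (r k) (gcd Q (derivative Q)) ≤
              rootMultiplicity (r k) (derivative Q) :=
            rm_le_of_dvd hQ'0 (gcd_dvd_right _ _) _
          rw [hQ'rm k hk] at h1
          rw [hDrm, hpick]
          exact h1
        · have h1 : rootMultiplicity (r k) (gcd Q (derivative Q)) ≤
              rootMultiplicity (r k) Q :=
            rm_le_of_dvd hQm.ne_zero (gcd_dvd_left _ _) _
          rw [hQrm, hpick] at h1
          omega
      · push_neg at hz
        have h1 : rootMultiplicity z (gcd Q (derivative Q)) ≤ rootMultiplicity z Q :=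
          rm_le_of_dvd hQm.ne_zero (gcd_dvd_left _ _) _
        rw [hQrm, hrange z hz] at h1
        omega
    exact associated_of_dvd_dvd hGD hDG
  · -- degenerate case: no k with j < μ k
    rw [Finset.not_nonempty_iff_eq_empty] at hF
    have hF2 : (Finset.univ.filter (fun k => j + 1 < μ k)) = ∅ := by
      apply Finset.eq_empty_of_forall_notMem
      intro k hk
      simp only [Finset.mem_filter, Finset.mem_univ, true_and] at hk
      have h2 := Finset.eq_empty_iff_forall_notMem.mp hF k
      simp only [Finset.mem_filter, Finset.mem_univ, true_and] at h2
      omega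
    have hQ1 : Q = 1 := by rw [hQ, hF, Finset.prod_empty]
    have hD1 : D = 1 := by rw [hD, hF2, Finset.prod_empty]
    rw [hD1, hQ1]
    simp only [derivative_one, gcd_zero_right]
    exact (normalize_associated _)
end

section
/- Let P be a polynomial of degree n ≥ 2 over ℂ with multiplicity vector (μ_1,…,μ_m) (weakly decreasing), and let μ̄ be the conjugate partition. Then for every i with 1 ≤ i ≤ n, the degree of gcd(P^(0), …, P^(i)) equals ∑_{k=i+1}^{μ_1} μ̄_k (interpreted as 0 when i ≥ μ_1). -/
open Polynomial

/-- For `P` of degree `n ≥ 2` over `ℂ` with multiplicity vector `μ` (weakly decreasing)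
and conjugate `μ̄`, for every `1 ≤ i ≤ n` the degree of `gcd(P⁽⁰⁾, …, P⁽ⁱ⁾)` equals
`∑_{k=i+1}^{μ_1} μ̄_k`. -/
theorem stmt_9 {n m : ℕ} (hn : 2 ≤ n) (hm : 0 < m) (a : ℂ) (ha : a ≠ 0)
    (r : Fin m → ℂ) (hr : Function.Injective r) (μ : Fin m → ℕ) (hanti : Antitone μ)
    (hpos : ∀ j, 1 ≤ μ j) (hsum : ∑ j, μ j = n) (P : ℂ[X])
    (hP : P = C a * ∏ k, (X - C (r k)) ^ μ k)
    (bar : ℕ → ℕ) (hbar : ∀ i, bar i = (Finset.univ.filter (fun j => i ≤ μ j)).card) :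
    ∀ i, 1 ≤ i → i ≤ n →
      (Finset.gcd (Finset.range (i + 1)) (fun j => derivative^[j] P)).natDegree
        = ∑ k ∈ Finset.Icc (i + 1) (μ ⟨0, hm⟩), bar k := by
  intro i hi1 hin
  classical
  -- basic facts
  have hXC : ∀ (e : Fin m → ℕ), (∏ k, (X - C (r k)) ^ e k) ≠ 0 := by
    intro e
    exact Finset.prod_ne_zero_iff.2 fun k _ => pow_ne_zero _ (X_sub_C_ne_zero (r k))
  have hPne : P ≠ 0 := by
    rw [hP]; exact mul_ne_zero (by simpa using ha) (hXC μ)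
  have hdegprod : ∀ (e : Fin m → ℕ), (∏ k, (X - C (r k)) ^ e k).natDegree = ∑ k, e k := by
    intro e
    rw [natDegree_prod _ _ (fun k _ => pow_ne_zero _ (X_sub_C_ne_zero (r k)))]
    simp [natDegree_pow]
  have hdeg : P.natDegree = n := by
    rw [hP, natDegree_C_mul ha, hdegprod, hsum]
  -- roots of P
  have hroots : P.roots = ∑ k, (μ k) • {r k} := by
    rw [hP, roots_C_mul _ ha, roots_prod _ _ (hXC μ)]
    simp only [roots_pow, roots_X_sub_C]
    rfl
  have hcount' : ∀ (e : Fin m → ℕ) (k : Fin m),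
      Multiset.count (r k) (∑ j, (e j) • ({r j} : Multiset ℂ)) = e k := by
    intro e k
    rw [Multiset.count_sum']
    rw [Finset.sum_eq_single k]
    · simp
    · intro j _ hjk
      have : r k ≠ r j := fun h => hjk (hr h).symm
      simp [Multiset.count_nsmul, Multiset.count_singleton, this]
    · simp
  have hcount0 : ∀ z (e : Fin m → ℕ), (¬ ∃ j, z = r j) →
      Multiset.count z (∑ j, (e j) • ({r j} : Multiset ℂ)) = 0 := by
    intro z e hz
    rw [Multiset.count_sum']
    apply Finset.sum_eq_zero
    intro j _
    have : z ≠ r j := fun h => hz ⟨j, h⟩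
    simp [Multiset.count_nsmul, Multiset.count_singleton, this]
  have hmult : ∀ k, P.rootMultiplicity (r k) = μ k := by
    intro k
    rw [← count_roots, hroots, hcount']
  have hμle : ∀ k, μ k ≤ n := by
    intro k
    rw [← hsum]
    exact Finset.single_le_sum (fun j _ => Nat.zero_le _) (Finset.mem_univ k)
  -- derivatives are nonzero up to n
  have hDer : ∀ j ≤ n, derivative^[j] P ≠ 0 ∧ (derivative^[j] P).natDegree = n - j := by
    intro j hj
    induction j with
    | zero => simpa using ⟨hPne, hdeg⟩
    | succ j ih =>
      obtain ⟨hne, hd⟩ := ih (Nat.le_of_succ_le hj)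
      have hdpos : (derivative^[j] P).natDegree ≠ 0 := by omega
      constructor
      · rw [Function.iterate_succ_apply']
        intro h0
        exact hdpos (natDegree_eq_zero_of_derivative_eq_zero h0)
      · rw [Function.iterate_succ_apply']
        have hcoef : (derivative (derivative^[j] P)).coeff (n - j - 1) ≠ 0 := by
          rw [coeff_derivative]
          have hnj : n - j - 1 + 1 = n - j := by omega
          rw [hnj]
          have hlc : (derivative^[j] P).coeff (n - j) ≠ 0 := by
            rw [← hd]
            exact fun h => hne (leadingCoeff_eq_zero.mp h)
          exact mul_ne_zero hlc (Nat.cast_add_one_ne_zero _)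
        have hge := le_natDegree_of_ne_zero hcoef
        have hle := natDegree_derivative_le (derivative^[j] P)
        omega
  -- multiplicity in derivatives
  have hmultD : ∀ k, ∀ j ≤ μ k, (derivative^[j] P).rootMultiplicity (r k) = μ k - j := by
    intro k j
    induction j with
    | zero => intro _; simpa using hmult k
    | succ j ih =>
      intro hj
      have hmj := ih (Nat.le_of_succ_le hj)
      have hne := (hDer j (le_trans (Nat.le_of_succ_le hj) (hμle k))).1
      have hroot : (derivative^[j] P).IsRoot (r k) := by
        rw [← rootMultiplicity_pos hne, hmj]
        omega
      rw [Function.iterate_succ_apply', derivative_rootMultiplicity_of_root hroot, hmj]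
      omega
  set Q : ℂ[X] := ∏ k, (X - C (r k)) ^ (μ k - i) with hQ
  have hQne : Q ≠ 0 := hXC _
  set g : ℂ[X] := Finset.gcd (Finset.range (i + 1)) (fun j => derivative^[j] P) with hg
  -- Q divides each derivative
  have hQdvd : ∀ j ≤ i, Q ∣ derivative^[j] P := by
    intro j hj
    apply Fintype.prod_dvd_of_coprime
    · intro k l hkl
      exact ((pairwise_coprime_X_sub_C hr hkl).pow)
    · intro k
      have hle : μ k - i ≤ (derivative^[j] P).rootMultiplicity (r k) := by
        rcases le_or_gt j (μ k) with h | h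
        · rw [hmultD k j h]; omega
        · have h0 : μ k - i = 0 := by omega
          rw [h0]; exact Nat.zero_le _
      exact dvd_trans (pow_dvd_pow _ hle) (pow_rootMultiplicity_dvd _ _)
  have hQg : Q ∣ g := Finset.dvd_gcd fun j hj =>
    hQdvd j (Nat.lt_succ_iff.mp (Finset.mem_range.mp hj))
  -- g divides each derivative
  have hgdvd : ∀ j ≤ i, g ∣ derivative^[j] P := fun j hj =>
    Finset.gcd_dvd (Finset.mem_range.mpr (Nat.lt_succ_of_le hj))
  have hgP : g ∣ P := by simpa using hgdvd 0 (Nat.zero_le i)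
  have hgne : g ≠ 0 := ne_zero_of_dvd_ne_zero hPne hgP
  have hgrootsP : g.roots ≤ P.roots := roots.le_of_dvd hPne hgP
  have hgmult : ∀ k, g.rootMultiplicity (r k) ≤ μ k - i := by
    intro k
    have hj : min i (μ k) ≤ i := min_le_left _ _
    have hdvd := hgdvd _ hj
    have hne := (hDer _ (le_trans hj hin)).1
    have hle : g.roots ≤ (derivative^[min i (μ k)] P).roots := roots.le_of_dvd hne hdvd
    have hc := Multiset.count_le_of_le (r k) hle
    rw [count_roots, count_roots, hmultD k _ (min_le_right _ _)] at hc
    omega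
  -- g divides Q
  have hgQ : g ∣ Q := by
    have hsplit : Multiset.card g.roots = g.natDegree :=
      splits_iff_card_roots.mp (IsAlgClosed.splits g)
    have hfact := C_leadingCoeff_mul_prod_multiset_X_sub_C hsplit
    have hMN : g.roots ≤ ∑ k, (μ k - i) • ({r k} : Multiset ℂ) := by
      rw [Multiset.le_iff_count]
      intro z
      by_cases hz : ∃ k, z = r k
      · obtain ⟨k, rfl⟩ := hz
        rw [hcount' (fun j => μ j - i) k, count_roots]
        exact hgmult k
      · have h1 : Multiset.count z g.roots = 0 := by
          have h2 := Multiset.count_le_of_le z hgrootsP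
          rw [hroots, hcount0 z μ hz] at h2
          omega
        rw [h1]; exact Nat.zero_le _
    have hprodN :
        ((∑ k, (μ k - i) • ({r k} : Multiset ℂ)).map (fun z => X - C z)).prod = Q := by
      have hmap : Multiset.map (fun z : ℂ => X - C z) (∑ k, (μ k - i) • ({r k} : Multiset ℂ))
          = ∑ k, Multiset.map (fun z : ℂ => X - C z) ((μ k - i) • ({r k} : Multiset ℂ)) :=
        map_sum (Multiset.mapAddMonoidHom _) _ _
      rw [hmap, Multiset.prod_sum]
      apply Finset.prod_congr rfl
      intro k _
      rw [Multiset.map_nsmul, Multiset.map_singleton, Multiset.prod_nsmul,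
        Multiset.prod_singleton]
    have hdvdprod : (g.roots.map (fun z => X - C z)).prod ∣ Q := by
      rw [← hprodN]
      exact Multiset.prod_dvd_prod_of_le (Multiset.map_le_map hMN)
    have hu : IsUnit (C g.leadingCoeff) :=
      isUnit_C.mpr (isUnit_iff_ne_zero.mpr (leadingCoeff_ne_zero.mpr hgne))
    rw [← hfact, mul_comm]
    exact hu.mul_right_dvd.mpr hdvdprod
  -- conclude
  have hdegg : g.natDegree = ∑ k, (μ k - i) := by
    rw [le_antisymm (natDegree_le_of_dvd hgQ hQne) (natDegree_le_of_dvd hQg hgne), hdegprod]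
  rw [hdegg]
  -- combinatorics
  have hμ0 : ∀ k, μ k ≤ μ ⟨0, hm⟩ := fun k => hanti (by exact Fin.mk_le_of_le_val (Nat.zero_le _))
  rw [Finset.sum_congr rfl fun j _ => hbar j]
  rw [Finset.sum_congr rfl fun j (_ : j ∈ Finset.Icc (i+1) (μ ⟨0, hm⟩)) =>
    (Finset.card_filter _ _)]
  rw [Finset.sum_comm]
  apply Finset.sum_congr rfl
  intro k _
  have hfil : (Finset.Icc (i+1) (μ ⟨0, hm⟩)).filter (fun j => j ≤ μ k)
      = Finset.Icc (i+1) (μ k) := by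
    ext j
    simp only [Finset.mem_filter, Finset.mem_Icc]
    have := hμ0 k
    omega
  rw [← Finset.sum_filter, hfil]
  simp [Nat.card_Icc]
end

section
/- Let P be a polynomial over ℂ of degree n with m distinct roots and multiplicity vector μ = (μ_1,…,μ_m), and let μ̄ be the conjugate partition of μ. For any partition λ of n, if λ > μ̄ in lexicographic order then the λ-th subresultant R_λ(P^(0),…,P^(n)) is the zero polynomial, while R_{μ̄}(P^(0),…,P^(n)) is nonzero. -/
open Polynomial Finset

/-- Determinant polynomial of a `p × q` matrix (for `p ≤ q`): the determinant of the
`p × p` matrix over `R[X]` keeping the first `p - 1` columns and replacing the last column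
by the column of "row polynomials" `∑_{j ≥ p-1} M_{r,j}·x^{q-1-j}`.  This agrees with
`∑_{i=0}^{q-p} det[M_1, …, M_{p-1}, M_{q-i}]·x^i`. -/
noncomputable def detPoly {R : Type*} [CommRing R] {p q : ℕ}
    (M : Matrix (Fin p) (Fin q) R) : Polynomial R :=
  Matrix.det (Matrix.of fun r c : Fin p =>
    if hc : (c : ℕ) < min (p - 1) q then C (M r ⟨c, (lt_min_iff.mp hc).2⟩)
    else ∑ j : Fin q, if p - 1 ≤ (j : ℕ) then C (M r j) * X ^ (q - 1 - (j : ℕ)) else 0)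

/-- The quantity `δ_0`: `max_{i, δ_i ≠ 0} (d_i + δ_i) − d_0` when this max is `≥ d_0`,
and `1` otherwise. -/
def delta0 (d0 : ℕ) {t : ℕ} (d δ : Fin t → ℕ) : ℕ :=
  if d0 ≤ (Finset.univ.filter fun i => δ i ≠ 0).sup (fun i => d i + δ i) then
    (Finset.univ.filter fun i => δ i ≠ 0).sup (fun i => d i + δ i) - d0
  else 1

/-- The `δ`-th subresultant `R_δ(F_0, F_1, …, F_t)`: the determinant polynomial of the
generalized Sylvester matrix whose rows are the coefficient vectors (in descending
powers, over `δ_0 + d_0` columns) of `x^{δ_0-1}F_0, …, x^0F_0`, then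
`x^{δ_1-1}F_1, …, x^0F_1`, …, `x^{δ_t-1}F_t, …, x^0F_t`.  Row `r` belongs to block `i`
when `∑_{i' < i} δ'_{i'} ≤ r < ∑_{i' ≤ i} δ'_{i'}` (with `δ' = (δ_0, δ_1, …, δ_t)`), and
is the coefficient row of `x^{δ'_i - 1 - (r - ∑_{i' < i} δ'_{i'})}·F_i`. -/
noncomputable def subres {R : Type*} [CommRing R] {t : ℕ}
    (F0 : Polynomial R) (F : Fin t → Polynomial R) (δ : Fin t → ℕ) : Polynomial R :=
  let d0 := F0.natDegree
  let δ0 := delta0 d0 (fun i => (F i).natDegree) δ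
  let δ' : Fin (t + 1) → ℕ := Fin.cons δ0 δ
  let F' : Fin (t + 1) → Polynomial R := Fin.cons F0 F
  detPoly (Matrix.of fun (r : Fin (∑ i, δ' i)) (c : Fin (δ0 + d0)) =>
    ∑ i : Fin (t + 1),
      if (∑ i' ∈ Finset.univ.filter (fun i' => i' < i), δ' i') ≤ (r : ℕ) ∧
          (r : ℕ) < (∑ i' ∈ Finset.univ.filter (fun i' => i' < i), δ' i') + δ' i then
        (X ^ (δ' i - 1 - ((r : ℕ) - ∑ i' ∈ Finset.univ.filter (fun i' => i' < i), δ' i')) *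
            F' i).coeff (δ0 + d0 - 1 - (c : ℕ))
      else 0)

namespace Stmt13Aux

lemma filter_val_lt_succ {t : ℕ} (k : ℕ) (hk : k < t) :
    (univ.filter fun i : Fin t => (i : ℕ) < k + 1)
      = insert ⟨k, hk⟩ (univ.filter fun i : Fin t => (i : ℕ) < k) := by
  ext i
  simp only [mem_filter, mem_univ, true_and, mem_insert, Fin.ext_iff]
  omega

lemma filter_val_lt_of_le {t k : ℕ} (hk : t ≤ k) :
    (univ.filter fun i : Fin t => (i : ℕ) < k) = univ := by
  rw [Finset.filter_true_of_mem]
  intro i _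
  exact lt_of_lt_of_le i.2 hk

lemma card_filter_val_lt (t c : ℕ) :
    (univ.filter fun i : Fin t => (i : ℕ) < c).card = min c t := by
  induction c with
  | zero => simp
  | succ c ih =>
    rcases lt_or_ge c t with h | h
    · rw [filter_val_lt_succ c h, card_insert_of_notMem (by simp), ih]
      omega
    · rw [filter_val_lt_of_le (h.trans (Nat.le_succ c)), card_univ, Fintype.card_fin]
      rw [filter_val_lt_of_le h, card_univ, Fintype.card_fin] at ih
      omega

/-- partial sums of a `Fin t`-indexed tuple -/
def sig {t : ℕ} (δ : Fin t → ℕ) (k : ℕ) : ℕ :=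
  ∑ i' ∈ univ.filter (fun i' : Fin t => (i' : ℕ) < k), δ i'

lemma sig_zero {t : ℕ} (δ : Fin t → ℕ) : sig δ 0 = 0 := by simp [sig]

lemma sig_succ {t : ℕ} (δ : Fin t → ℕ) {k : ℕ} (hk : k < t) :
    sig δ (k + 1) = sig δ k + δ ⟨k, hk⟩ := by
  rw [sig, sig, filter_val_lt_succ k hk, sum_insert (by simp)]
  ring

lemma sig_top {t : ℕ} (δ : Fin t → ℕ) {k : ℕ} (hk : t ≤ k) :
    sig δ k = ∑ i, δ i := by rw [sig, filter_val_lt_of_le hk]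

lemma sig_mono {t : ℕ} (δ : Fin t → ℕ) {k k' : ℕ} (h : k ≤ k') :
    sig δ k ≤ sig δ k' := by
  apply Finset.sum_le_sum_of_subset
  intro i hi
  simp only [mem_filter, mem_univ, true_and] at hi ⊢
  omega

lemma sig_eq {t : ℕ} (δ : Fin t → ℕ) (i : Fin t) :
    ∑ i' ∈ univ.filter (fun i' => i' < i), δ i' = sig δ (i : ℕ) := by
  rw [sig]
  apply Finset.sum_congr _ (fun _ _ => rfl)
  apply Finset.filter_congr
  intro j _
  exact Fin.lt_def

lemma exists_block {t : ℕ} (δ : Fin t → ℕ) {r : ℕ} (hr : r < sig δ t) :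
    ∃ i : Fin t, sig δ (i : ℕ) ≤ r ∧ r < sig δ (i : ℕ) + δ i := by
  classical
  have h0 : sig δ 0 ≤ r := by simp [sig_zero]
  have hkP : sig δ (Nat.findGreatest (fun k => sig δ k ≤ r) t) ≤ r :=
    Nat.findGreatest_spec (P := fun k => sig δ k ≤ r) (Nat.zero_le t) h0
  have hkt : Nat.findGreatest (fun k => sig δ k ≤ r) t ≤ t :=
    Nat.findGreatest_le t
  have hkne : Nat.findGreatest (fun k => sig δ k ≤ r) t ≠ t := by
    intro he
    rw [he] at hkP
    omega
  have hklt : Nat.findGreatest (fun k => sig δ k ≤ r) t < t := lt_of_le_of_ne hkt hkne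
  refine ⟨⟨Nat.findGreatest (fun k => sig δ k ≤ r) t, hklt⟩, hkP, ?_⟩
  by_contra hcon
  push_neg at hcon
  have hP1 : sig δ (Nat.findGreatest (fun k => sig δ k ≤ r) t + 1) ≤ r := by
    rw [sig_succ δ hklt]; exact hcon
  exact Nat.findGreatest_is_greatest (Nat.lt_succ_self _) hklt hP1

lemma sum_trunc {M : Type*} [AddCommMonoid M] {T N : ℕ} (h : N ≤ T) (f : Fin T → M)
    (hf : ∀ r : Fin T, N ≤ (r : ℕ) → f r = 0) :
    ∑ r, f r = ∑ r : Fin N, f (Fin.castLE h r) := by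
  classical
  have h1 : ∀ (K : ℕ) (hK : K ≤ T), ∑ r : Fin K, f (Fin.castLE hK r)
      = ∑ k ∈ range K, if hk : k < T then f ⟨k, hk⟩ else 0 := by
    intro K hK
    rw [← Fin.sum_univ_eq_sum_range (fun k => if hk : k < T then f ⟨k, hk⟩ else 0) K]
    apply Finset.sum_congr rfl
    intro i _
    rw [dif_pos (lt_of_lt_of_le i.2 hK)]
    rfl
  have h2 : ∑ r, f r = ∑ r : Fin T, f (Fin.castLE le_rfl r) := rfl
  rw [h2, h1 T le_rfl, h1 N h]
  symm
  apply Finset.sum_subset (Finset.range_subset_range.2 h)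
  intro k hkT hkN
  simp only [Finset.mem_range] at hkT hkN
  rw [dif_pos hkT]
  exact hf ⟨k, hkT⟩ (by simp; omega)


lemma detPoly_cast {R : Type*} [CommRing R] {p q : ℕ} (h : q = p) (M : Matrix (Fin p) (Fin q) R) :
    detPoly M = C (M.submatrix id (Fin.cast h.symm)).det := by
  subst h
  rw [detPoly, RingHom.map_det]
  congr 1
  ext r c
  simp only [RingHom.mapMatrix_apply, Matrix.map_apply, Matrix.submatrix_apply, id_eq,
    Matrix.of_apply]
  have hcast : Fin.cast rfl c = c := rfl
  rw [hcast]
  by_cases hc : (c : ℕ) < min (q - 1) q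
  · rw [dif_pos hc]
  · rw [dif_neg hc]
    have hq1 : ¬ ((c : ℕ) < q - 1) := by
      intro hlt
      exact hc (lt_min hlt (lt_of_lt_of_le hlt (Nat.sub_le q 1)))
    have hcval : (c : ℕ) = q - 1 := by have := c.2; omega
    rw [Finset.sum_eq_single c]
    · rw [if_pos (le_of_eq hcval.symm), hcval, Nat.sub_self, pow_zero, mul_one]
    · intro j _ hj
      rw [if_neg]
      intro hle
      exact hj (Fin.ext (by have := j.2; omega))
    · intro habs
      exact absurd (Finset.mem_univ c) habs

/-- the polynomial whose coefficients give row `r` of the generalized Sylvester matrix -/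
noncomputable def rowPoly {t : ℕ} (δ : Fin t → ℕ) (F : Fin t → ℂ[X]) (r : ℕ) : ℂ[X] :=
  ∑ i : Fin t, if sig δ (i : ℕ) ≤ r ∧ r < sig δ (i : ℕ) + δ i
    then X ^ (δ i - 1 - (r - sig δ (i : ℕ))) * F i else 0

/-- the (square) generalized Sylvester matrix -/
noncomputable def SM {t : ℕ} (δ : Fin t → ℕ) (F : Fin t → ℂ[X]) :
    Matrix (Fin (∑ i, δ i)) (Fin (∑ i, δ i)) ℂ :=
  Matrix.of fun r c => (rowPoly δ F (r : ℕ)).coeff (∑ i, δ i - 1 - (c : ℕ))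

set_option maxHeartbeats 2000000 in
lemma subres_eq {t : ℕ} (F0 : ℂ[X]) (F : Fin t → ℂ[X]) (δ : Fin t → ℕ) (δ0 : ℕ)
    (hδ0 : delta0 F0.natDegree (fun i => (F i).natDegree) δ = δ0)
    (hsq : δ0 + F0.natDegree = ∑ i, (Fin.cons δ0 δ : Fin (t+1) → ℕ) i) :
    subres F0 F δ = C (SM (Fin.cons δ0 δ) (Fin.cons F0 F)).det := by
  subst hδ0
  rw [subres]
  rw [detPoly_cast (R := ℂ) hsq]
  congr 1
  congr 1
  ext r c
  simp only [Matrix.submatrix_apply, Matrix.of_apply, id_eq, SM, rowPoly, finset_sum_coeff,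
    Fin.coe_cast]
  rw [hsq]
  apply Finset.sum_congr rfl
  intro i _
  simp only [sig_eq]
  split_ifs with h
  · rfl
  · simp


/-- robust degree bound for the row polynomials -/
lemma rowPoly_mem_degreeLT {t : ℕ} (δ : Fin t → ℕ) (F : Fin t → ℂ[X]) {T : ℕ} (hT : 1 ≤ T)
    (hdegs : ∀ i, δ i ≠ 0 → (F i).natDegree + δ i ≤ T) (r : ℕ) :
    rowPoly δ F r ∈ degreeLT ℂ T := by
  rw [rowPoly]
  apply Submodule.sum_mem
  intro i _
  split_ifs with hcond
  · have hδi : δ i ≠ 0 := by omega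
    rw [mem_degreeLT]
    have h1 : (X ^ (δ i - 1 - (r - sig δ (i : ℕ))) * F i).natDegree ≤ T - 1 := by
      refine le_trans (natDegree_mul_le) ?_
      have := hdegs i hδi
      rw [natDegree_X_pow]
      omega
    calc degree (X ^ (δ i - 1 - (r - sig δ (i : ℕ))) * F i)
        ≤ ((X ^ (δ i - 1 - (r - sig δ (i : ℕ))) * F i).natDegree : WithBot ℕ) :=
          degree_le_natDegree
      _ ≤ ((T - 1 : ℕ) : WithBot ℕ) := by exact_mod_cast h1
      _ < (T : WithBot ℕ) := by exact_mod_cast Nat.sub_lt hT Nat.one_pos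
  · exact Submodule.zero_mem _

lemma detA {t : ℕ} (δ : Fin (t + 1) → ℕ) (F : Fin (t + 1) → ℂ[X])
    (hdegs : ∀ i, δ i ≠ 0 → (F i).natDegree + δ i ≤ ∑ i', δ i')
    (s : ℕ) (hs : s ≤ t) (g : ℂ[X]) (hg : g ≠ 0)
    (hdvd : ∀ i : Fin (t + 1), (i : ℕ) ≤ s → g ∣ F i)
    (he : g.natDegree ≤ ∑ i', δ i')
    (hcount : ∑ i', δ i' < sig δ (s + 1) + g.natDegree) :
    (SM δ F).det = 0 := by
  classical
  set T : ℕ := ∑ i', δ i' with hTdef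
  set N : ℕ := sig δ (s + 1) with hNdef
  have hNT : N ≤ T := by
    rw [hNdef, hTdef, ← sig_top δ (le_refl (t + 1))]
    exact sig_mono δ (by omega)
  have hT1 : 1 ≤ T := by omega
  -- the subspace W
  set W : Submodule ℂ (Polynomial ℂ) :=
    degreeLT ℂ T ⊓ (Ideal.span {g}).restrictScalars ℂ with hW
  -- membership of the first N rows in W
  have hmem : ∀ r : ℕ, r < N → rowPoly δ F r ∈ W := by
    intro r hr
    rw [hW, rowPoly]
    apply Submodule.sum_mem
    intro i _
    split_ifs with hcond
    · have hile : (i : ℕ) ≤ s := by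
        by_contra hgt
        have : N ≤ sig δ (i : ℕ) := by rw [hNdef]; exact sig_mono δ (by omega)
        omega
      have hδi : δ i ≠ 0 := by omega
      rw [Submodule.mem_inf]
      constructor
      · rw [mem_degreeLT]
        have h1 : (X ^ (δ i - 1 - (r - sig δ (i : ℕ))) * F i).natDegree ≤ T - 1 := by
          refine le_trans (natDegree_mul_le) ?_
          have := hdegs i hδi
          rw [natDegree_X_pow]
          omega
        calc degree (X ^ (δ i - 1 - (r - sig δ (i : ℕ))) * F i)
            ≤ ((X ^ (δ i - 1 - (r - sig δ (i : ℕ))) * F i).natDegree : WithBot ℕ) :=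
              degree_le_natDegree
          _ ≤ ((T - 1 : ℕ) : WithBot ℕ) := by exact_mod_cast h1
          _ < (T : WithBot ℕ) := by exact_mod_cast Nat.sub_lt hT1 Nat.one_pos
      · show _ ∈ (Ideal.span {g}).restrictScalars ℂ
        rw [Submodule.restrictScalars_mem, Ideal.mem_span_singleton]
        exact (hdvd i hile).mul_left _
    · exact Submodule.zero_mem _
  -- dimension bound for W
  haveI hfin1 : FiniteDimensional ℂ (degreeLT ℂ T) :=
    Module.Finite.equiv (degreeLTEquiv ℂ T).symm
  haveI hfin2 : FiniteDimensional ℂ (degreeLT ℂ (T - g.natDegree)) :=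
    Module.Finite.equiv (degreeLTEquiv ℂ (T - g.natDegree)).symm
  haveI hfinW : FiniteDimensional ℂ W := Submodule.finiteDimensional_of_le inf_le_left
  have hWle : W ≤ Submodule.map (LinearMap.mulLeft ℂ g) (degreeLT ℂ (T - g.natDegree)) := by
    intro f hf
    rw [hW, Submodule.mem_inf] at hf
    obtain ⟨hf1, hf2⟩ := hf
    rw [Submodule.restrictScalars_mem, Ideal.mem_span_singleton] at hf2
    obtain ⟨h, rfl⟩ := hf2
    refine Submodule.mem_map.2 ⟨h, ?_, by rw [LinearMap.mulLeft_apply]⟩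
    rw [mem_degreeLT]
    rcases eq_or_ne h 0 with rfl | hh
    · rw [degree_zero]; exact WithBot.bot_lt_coe _
    · rw [← natDegree_lt_iff_degree_lt hh]
      rw [mem_degreeLT, ← natDegree_lt_iff_degree_lt (mul_ne_zero hg hh)] at hf1
      rw [natDegree_mul hg hh] at hf1
      omega
  have hrankW : Module.finrank ℂ W ≤ T - g.natDegree := by
    refine le_trans (Submodule.finrank_mono hWle) ?_
    refine le_trans (Submodule.finrank_map_le _ _) ?_
    rw [(degreeLTEquiv ℂ (T - g.natDegree)).finrank_eq]
    simp [Module.finrank_fin_fun]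
  -- the family of the first N rows is linearly dependent in W
  have hnli : ¬ LinearIndependent ℂ
      (fun j : Fin N => (⟨rowPoly δ F ((Fin.castLE hNT j : Fin T) : ℕ),
        hmem _ (by simp)⟩ : W)) := by
    intro hli
    have hcard := hli.fintype_card_le_finrank
    rw [Fintype.card_fin] at hcard
    omega
  obtain ⟨cvec, hc0, j0, hj0⟩ := Fintype.not_linearIndependent_iff.1 hnli
  have hpoly : ∑ j : Fin N, cvec j • rowPoly δ F ((Fin.castLE hNT j : Fin T) : ℕ) = 0 := by
    have h2 := congrArg (W.subtype) hc0
    rw [map_sum] at h2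
    simpa using h2
  set v : Fin T → ℂ := fun rr => if h : (rr : ℕ) < N then cvec ⟨rr, h⟩ else 0 with hv
  have hveq : ∀ j : Fin N, v (Fin.castLE hNT j) = cvec j := by
    intro j
    rw [hv]
    simp only []
    rw [dif_pos (show ((Fin.castLE hNT j : Fin T) : ℕ) < N from j.2)]
    congr 1
  have hz : ∑ rr : Fin T, v rr • rowPoly δ F (rr : ℕ) = 0 := by
    rw [sum_trunc hNT _ (fun rr hrr => by
      rw [hv]; simp only []; rw [dif_neg (not_lt.2 hrr), zero_smul])]
    rw [← hpoly]
    apply Finset.sum_congr rfl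
    intro j _
    rw [hveq j]
  apply Matrix.exists_vecMul_eq_zero_iff.mp
  refine ⟨v, ?_, ?_⟩
  · intro hv0
    apply hj0
    rw [← hveq j0, hv0]
    rfl
  · funext c
    calc Matrix.vecMul v (SM δ F) c
        = ∑ rr : Fin T, v rr * (rowPoly δ F (rr : ℕ)).coeff (T - 1 - (c : ℕ)) := by
          simp [Matrix.vecMul, dotProduct, SM]
          rfl
      _ = (∑ rr : Fin T, v rr • rowPoly δ F (rr : ℕ)).coeff (T - 1 - (c : ℕ)) := by
          rw [finset_sum_coeff]
          exact Finset.sum_congr rfl (fun rr _ => by rw [coeff_smul, smul_eq_mul])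
      _ = 0 := by rw [hz, coeff_zero]

set_option maxHeartbeats 1000000 in
lemma detB {n m : ℕ} (r : Fin m → ℂ) (hr : Function.Injective r)
    (μ : Fin m → ℕ) (P : ℂ[X]) (hP0 : P ≠ 0)
    (hPne : ∀ i : ℕ, i ≤ n → derivative^[i] P ≠ 0)
    (hroot : ∀ k (i : ℕ), i ≤ μ k → rootMultiplicity (r k) (derivative^[i] P) = μ k - i)
    (hdvd : ∀ k (i : ℕ), (X - C (r k)) ^ (μ k - i) ∣ derivative^[i] P)
    (δ : Fin (n + 1) → ℕ)
    (hδ : ∀ i : Fin (n + 1), 1 ≤ (i : ℕ) → δ i ≤ (univ.filter fun k => (i : ℕ) ≤ μ k).card)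
    (hdegs : ∀ i, δ i ≠ 0 → (derivative^[(i : ℕ)] P).natDegree + δ i ≤ ∑ i', δ i') :
    (SM δ (fun i => derivative^[(i : ℕ)] P)).det ≠ 0 := by
  classical
  intro hdet
  set T : ℕ := ∑ i', δ i' with hTdef
  obtain ⟨v, hv0, hvM⟩ := Matrix.exists_vecMul_eq_zero_iff.mpr hdet
  set F : Fin (n + 1) → ℂ[X] := fun i => derivative^[(i : ℕ)] P with hF
  have hcol : ∀ k : ℕ, k < T →
      ∑ rr : Fin T, v rr * (rowPoly δ F ((rr : Fin T) : ℕ)).coeff k = 0 := by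
    intro k hk
    have h2 := congrFun hvM ⟨T - 1 - k, by omega⟩
    have h3 : T - 1 - ((⟨T - 1 - k, by omega⟩ : Fin T) : ℕ) = k := by
      simp only [Fin.val_mk]; omega
    simpa [Matrix.vecMul, dotProduct, SM, ← hTdef, h3, show T - 1 - (T - 1 - k) = k by omega] using h2
  have hz : ∑ rr : Fin T, v rr • rowPoly δ F ((rr : Fin T) : ℕ) = 0 := by
    ext k
    rw [finset_sum_coeff, coeff_zero]
    simp only [coeff_smul, smul_eq_mul]
    by_cases hk : k < T
    · exact hcol k hk
    · apply Finset.sum_eq_zero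
      intro rr _
      have hT1 : 1 ≤ T := by have := rr.2; omega
      have hmem := rowPoly_mem_degreeLT δ F hT1 hdegs (rr : ℕ)
      rw [mem_degreeLT] at hmem
      have hdeg : (rowPoly δ F ((rr : Fin T) : ℕ)).degree < (k : WithBot ℕ) :=
        lt_of_lt_of_le hmem (by exact_mod_cast (not_lt.1 hk))
      rw [coeff_eq_zero_of_degree_lt hdeg, mul_zero]
  set A : Fin (n + 1) → ℂ[X] := fun i => ∑ rr : Fin T,
    v rr • (if sig δ (i : ℕ) ≤ (rr : ℕ) ∧ (rr : ℕ) < sig δ (i : ℕ) + δ i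
      then (X : ℂ[X]) ^ (δ i - 1 - ((rr : ℕ) - sig δ (i : ℕ))) else 0) with hA
  have hA1 : ∑ i : Fin (n + 1), A i * F i = 0 := by
    calc ∑ i : Fin (n + 1), A i * F i
        = ∑ i : Fin (n + 1), ∑ rr : Fin T,
            v rr • (if sig δ (i : ℕ) ≤ (rr : ℕ) ∧ (rr : ℕ) < sig δ (i : ℕ) + δ i
              then X ^ (δ i - 1 - ((rr : ℕ) - sig δ (i : ℕ))) * F i else 0) := by
          apply Finset.sum_congr rfl
          intro i _
          simp only [hA]
          rw [Finset.sum_mul]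
          apply Finset.sum_congr rfl
          intro rr _
          rw [smul_mul_assoc, ite_mul, zero_mul]
      _ = ∑ rr : Fin T, ∑ i : Fin (n + 1),
            v rr • (if sig δ (i : ℕ) ≤ (rr : ℕ) ∧ (rr : ℕ) < sig δ (i : ℕ) + δ i
              then X ^ (δ i - 1 - ((rr : ℕ) - sig δ (i : ℕ))) * F i else 0) :=
          Finset.sum_comm
      _ = ∑ rr : Fin T, v rr • rowPoly δ F ((rr : Fin T) : ℕ) := by
          apply Finset.sum_congr rfl
          intro rr _
          rw [rowPoly, Finset.smul_sum]
      _ = 0 := hz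
  have hdegA : ∀ i, (A i).natDegree ≤ δ i - 1 := by
    intro i
    simp only [hA]
    apply natDegree_sum_le_of_forall_le
    intro rr _
    refine le_trans (natDegree_smul_le _ _) ?_
    split_ifs with h
    · rw [natDegree_X_pow]; omega
    · rw [natDegree_zero]; omega
  have hAzero0 : ∀ i, δ i = 0 → A i = 0 := by
    intro i h0
    simp only [hA]
    apply Finset.sum_eq_zero
    intro rr _
    rw [if_neg (by omega), smul_zero]
  have hext : ∀ (rr : Fin T) (i : Fin (n + 1)),
      sig δ (i : ℕ) ≤ (rr : ℕ) ∧ (rr : ℕ) < sig δ (i : ℕ) + δ i →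
      (A i).coeff (δ i - 1 - ((rr : ℕ) - sig δ (i : ℕ))) = v rr := by
    intro rr i hcond
    simp only [hA]
    rw [finset_sum_coeff, Finset.sum_eq_single rr]
    · rw [coeff_smul, if_pos hcond, coeff_X_pow, if_pos rfl, smul_eq_mul, mul_one]
    · intro b _ hb
      rw [coeff_smul]
      split_ifs with hcondb
      · rw [coeff_X_pow, if_neg, smul_zero]
        intro heq
        apply hb
        apply Fin.ext
        omega
      · rw [coeff_zero, smul_zero]
    · intro habs
      exact absurd (mem_univ rr) habs
  have hAall : ∀ i, A i = 0 := by
    by_contra hcon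
    push_neg at hcon
    obtain ⟨i₁, hi₁⟩ := hcon
    have hΦne : (univ.filter fun i => A i ≠ 0).Nonempty := ⟨i₁, by simp [hi₁]⟩
    set T₀ := (univ.filter fun i => A i ≠ 0).max' hΦne with hT₀
    have hT₀ne : A T₀ ≠ 0 := (mem_filter.1 (Finset.max'_mem _ hΦne)).2
    have hgt : ∀ i, T₀ < i → A i = 0 := by
      intro i hi
      by_contra hne
      exact absurd (Finset.le_max' _ i (by simp [hne])) (not_le.2 hi)
    have hsplit : A T₀ * F T₀ = -∑ i ∈ univ.filter (· < T₀), A i * F i := by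
      have h5 := hA1
      rw [← Finset.sum_filter_add_sum_filter_not univ (· ≤ T₀)] at h5
      have h6 : ∑ i ∈ univ.filter (fun i => ¬ i ≤ T₀), A i * F i = 0 := by
        apply Finset.sum_eq_zero
        intro i hi
        rw [hgt i (not_le.1 (mem_filter.1 hi).2), zero_mul]
      have h7 : univ.filter (fun i => i ≤ T₀) = insert T₀ (univ.filter (fun i => i < T₀)) := by
        ext i
        simp only [mem_filter, mem_univ, true_and, mem_insert]
        constructor
        · intro h
          rcases lt_or_eq_of_le h with h | h
          · exact Or.inr h
          · exact Or.inl h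
        · rintro (rfl | h)
          · exact le_refl _
          · exact le_of_lt h
      rw [h6, add_zero, h7, Finset.sum_insert (by simp)] at h5
      exact eq_neg_of_add_eq_zero_left h5
    rcases Nat.eq_zero_or_pos (T₀ : ℕ) with h0 | h1
    · have hT00 : T₀ = (0 : Fin (n + 1)) := Fin.ext (by simp [h0])
      have hflt : univ.filter (· < T₀) = (∅ : Finset (Fin (n + 1))) := by
        rw [hT00]
        ext i
        simp [Fin.lt_def]
      rw [hflt, Finset.sum_empty, neg_zero] at hsplit
      have hFT : F T₀ = P := by rw [hF]; simp only []; rw [h0]; rfl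
      rw [hFT] at hsplit
      rcases mul_eq_zero.1 hsplit with h | h
      · exact hT₀ne h
      · exact hP0 h
    · set K := univ.filter fun k => (T₀ : ℕ) ≤ μ k with hK
      have hTn : (T₀ : ℕ) ≤ n := Nat.lt_succ_iff.1 T₀.2
      have hdiv : ∀ k ∈ K, (X - C (r k)) ∣ A T₀ := by
        intro k hk
        rw [hK, mem_filter] at hk
        obtain ⟨-, hk⟩ := hk
        have hd1 : (X - C (r k)) ^ (μ k - (T₀ : ℕ) + 1) ∣ A T₀ * F T₀ := by
          rw [hsplit, dvd_neg]
          apply Finset.dvd_sum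
          intro i hi
          have hilt : (i : ℕ) < (T₀ : ℕ) := (mem_filter.1 hi).2
          exact dvd_mul_of_dvd_right
            ((pow_dvd_pow _ (by omega : μ k - (T₀ : ℕ) + 1 ≤ μ k - (i : ℕ))).trans
              (hdvd k (i : ℕ))) _
        have hne2 : A T₀ * F T₀ ≠ 0 := mul_ne_zero hT₀ne (hPne _ hTn)
        have h8 := (le_rootMultiplicity_iff hne2).2 hd1
        rw [rootMultiplicity_mul hne2] at h8
        have h8' : rootMultiplicity (r k) (F T₀) = μ k - (T₀ : ℕ) := hroot k (T₀ : ℕ) hk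
        rw [h8'] at h8
        have h9 : 0 < rootMultiplicity (r k) (A T₀) := by omega
        exact dvd_iff_isRoot.2 ((rootMultiplicity_pos hT₀ne).1 h9)
      have hcop : (↑K : Set (Fin m)).Pairwise (Function.onFun IsCoprime fun k => X - C (r k)) :=
        (Polynomial.pairwise_coprime_X_sub_C hr).set_pairwise _
      have hprod : (∏ k ∈ K, (X - C (r k))) ∣ A T₀ := Finset.prod_dvd_of_coprime hcop hdiv
      have hdegprod : (∏ k ∈ K, (X - C (r k))).natDegree = K.card := by
        rw [natDegree_prod _ _ (fun k _ => X_sub_C_ne_zero (r k))]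
        simp [natDegree_X_sub_C]
      have hδT₀ : 1 ≤ δ T₀ := by
        by_contra h
        push_neg at h
        exact hT₀ne (hAzero0 T₀ (by omega))
      have h10 : K.card ≤ (A T₀).natDegree := hdegprod ▸ natDegree_le_of_dvd hprod hT₀ne
      have h11 := hdegA T₀
      have h12 := hδ T₀ h1
      rw [← hK] at h12
      omega
  apply hv0
  funext rr
  have hrT : (rr : ℕ) < sig δ (n + 1) := by
    rw [sig_top δ (le_refl (n + 1))]
    exact rr.2
  obtain ⟨i, hi1, hi2⟩ := exists_block δ hrT
  have hres := hext rr i ⟨hi1, hi2⟩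
  rw [hAall i] at hres
  simpa using hres.symm

lemma iter_facts {n : ℕ} (P : ℂ[X]) (hPdeg : P.natDegree = n) (hP0 : P ≠ 0) :
    ∀ i : ℕ, i ≤ n → (derivative^[i] P).natDegree = n - i ∧ derivative^[i] P ≠ 0 := by
  intro i hi
  have hco : (derivative^[i] P).coeff (n - i) ≠ 0 := by
    rw [coeff_iterate_derivative]
    have hni : n - i + i = n := by omega
    rw [hni]
    have hlc : P.coeff n = P.leadingCoeff := by rw [← hPdeg]; rfl
    rw [hlc, nsmul_eq_mul]
    refine mul_ne_zero ?_ (leadingCoeff_ne_zero.2 hP0)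
    rw [Nat.cast_ne_zero]
    intro h
    rw [Nat.descFactorial_eq_zero_iff_lt] at h
    omega
  refine ⟨le_antisymm ?_ (le_natDegree_of_ne_zero hco), fun h => hco (by rw [h]; simp)⟩
  calc (derivative^[i] P).natDegree ≤ P.natDegree - i := natDegree_iterate_derivative P i
    _ = n - i := by rw [hPdeg]

lemma root_base {m : ℕ} (a : ℂ) (ha : a ≠ 0) (r : Fin m → ℂ) (hr : Function.Injective r)
    (μ : Fin m → ℕ) (P : ℂ[X]) (hP : P = C a * ∏ k, (X - C (r k)) ^ μ k) (k : Fin m) :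
    rootMultiplicity (r k) P = μ k := by
  classical
  have hQ : P = (C a * ∏ j ∈ univ.erase k, (X - C (r j)) ^ μ j) * (X - C (r k)) ^ μ k := by
    rw [hP, ← Finset.mul_prod_erase univ _ (mem_univ k)]
    ring
  have hQev : Polynomial.eval (r k) (C a * ∏ j ∈ univ.erase k, (X - C (r j)) ^ μ j) ≠ 0 := by
    rw [eval_mul, eval_C, eval_prod]
    apply mul_ne_zero ha
    rw [Finset.prod_ne_zero_iff]
    intro j hj
    rw [eval_pow, eval_sub, eval_X, eval_C]
    apply pow_ne_zero
    exact sub_ne_zero.2 fun he => (Finset.ne_of_mem_erase hj) (hr he).symm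
  have hQ0 : (C a * ∏ j ∈ univ.erase k, (X - C (r j)) ^ μ j) ≠ 0 := by
    intro h
    rw [h, eval_zero] at hQev
    exact hQev rfl
  rw [hQ, rootMultiplicity_mul_X_sub_C_pow hQ0, rootMultiplicity_eq_zero hQev, zero_add]

lemma root_iter {n m : ℕ} (r : Fin m → ℂ) (μ : Fin m → ℕ) (P : ℂ[X])
    (hbase : ∀ k, rootMultiplicity (r k) P = μ k)
    (hPne : ∀ i : ℕ, i ≤ n → derivative^[i] P ≠ 0)
    (hμn : ∀ k, μ k ≤ n) :
    ∀ k (i : ℕ), i ≤ μ k → rootMultiplicity (r k) (derivative^[i] P) = μ k - i := by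
  intro k i
  induction i with
  | zero => intro _; simpa using hbase k
  | succ i ih =>
    intro hi
    have hprev := ih (by omega)
    have hne : derivative^[i] P ≠ 0 := hPne i (by have := hμn k; omega)
    have hisroot : (derivative^[i] P).IsRoot (r k) :=
      (rootMultiplicity_pos hne).1 (by omega)
    rw [Function.iterate_succ_apply', derivative_rootMultiplicity_of_root hisroot, hprev]
    omega

lemma dvd_iter {m : ℕ} (r : Fin m → ℂ) (μ : Fin m → ℕ) (P : ℂ[X])
    (hroot : ∀ k (i : ℕ), i ≤ μ k → rootMultiplicity (r k) (derivative^[i] P) = μ k - i) :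
    ∀ k (i : ℕ), (X - C (r k)) ^ (μ k - i) ∣ derivative^[i] P := by
  intro k i
  rcases le_or_gt i (μ k) with hi | hi
  · rw [← hroot k i hi]
    exact pow_rootMultiplicity_dvd _ _
  · rw [Nat.sub_eq_zero_of_le (le_of_lt hi), pow_zero]
    exact one_dvd _

lemma bar_count {n m : ℕ} (μ : Fin m → ℕ) (bar : Fin n → ℕ)
    (hbar : ∀ i, bar i = (Finset.univ.filter fun j => (i : ℕ) + 1 ≤ μ j).card)
    (s : ℕ) (hs : s ≤ n) :
    ∑ j ∈ univ.filter (fun j : Fin n => (j : ℕ) < s), bar j = ∑ k, min s (μ k) := by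
  classical
  calc ∑ j ∈ univ.filter (fun j : Fin n => (j : ℕ) < s), bar j
      = ∑ j ∈ univ.filter (fun j : Fin n => (j : ℕ) < s),
          ∑ k : Fin m, if (j : ℕ) + 1 ≤ μ k then 1 else 0 := by
        apply Finset.sum_congr rfl
        intro j _
        rw [hbar j, Finset.card_filter]
    _ = ∑ k : Fin m, ∑ j ∈ univ.filter (fun j : Fin n => (j : ℕ) < s),
          (if (j : ℕ) + 1 ≤ μ k then 1 else 0) := Finset.sum_comm
    _ = ∑ k, min s (μ k) := by
        apply Finset.sum_congr rfl
        intro k _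
        rw [← Finset.sum_filter, Finset.filter_filter]
        rw [show (univ.filter fun j : Fin n => ((j : ℕ) < s ∧ (j : ℕ) + 1 ≤ μ k))
            = univ.filter fun j : Fin n => (j : ℕ) < min s (μ k) from
          Finset.filter_congr fun j _ => by constructor <;> (intro h; omega)]
        rw [Finset.sum_const, smul_eq_mul, mul_one, card_filter_val_lt]
        omega

lemma sig_cons (δ0v : ℕ) {n : ℕ} (lam : Fin n → ℕ) :
    ∀ k, k ≤ n → sig (Fin.cons δ0v lam : Fin (n + 1) → ℕ) (k + 1)
      = δ0v + ∑ j ∈ univ.filter (fun j : Fin n => (j : ℕ) < k), lam j := by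
  intro k
  induction k with
  | zero =>
    intro _
    rw [sig_succ _ (by omega), sig_zero]
    simp
  | succ k ih =>
    intro hk
    rw [sig_succ _ (by omega : k + 1 < n + 1), ih (by omega),
      filter_val_lt_succ k (by omega : k < n), Finset.sum_insert (by simp)]
    have hc : (Fin.cons δ0v lam : Fin (n + 1) → ℕ) ⟨k + 1, by omega⟩ = lam ⟨k, by omega⟩ := by
      rw [show (⟨k + 1, by omega⟩ : Fin (n + 1)) = Fin.succ ⟨k, by omega⟩ from rfl, Fin.cons_succ]
    rw [hc]
    ring

end Stmt13Aux
open Stmt13Aux in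
set_option maxHeartbeats 2000000 in
/-- For `P` over `ℂ` of degree `n` with multiplicity vector `μ` and conjugate `μ̄`:
if a partition `λ` of `n` is lexicographically greater than `μ̄`, then
`R_λ(P⁽⁰⁾, …, P⁽ⁿ⁾) = 0`, while `R_{μ̄}(P⁽⁰⁾, …, P⁽ⁿ⁾) ≠ 0`. -/
theorem stmt_13 {n m : ℕ} (hn : 1 ≤ n) (hm : 0 < m) (a : ℂ) (ha : a ≠ 0)
    (r : Fin m → ℂ) (hr : Function.Injective r) (μ : Fin m → ℕ) (hanti : Antitone μ)
    (hpos : ∀ j, 1 ≤ μ j) (hsum : ∑ j, μ j = n) (P : ℂ[X])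
    (hP : P = C a * ∏ k, (X - C (r k)) ^ μ k)
    (bar : Fin n → ℕ)
    (hbar : ∀ i, bar i = (Finset.univ.filter fun j => (i : ℕ) + 1 ≤ μ j).card) :
    (∀ lam : Fin n → ℕ, Antitone lam → ∑ i, lam i = n →
        (∃ i : Fin n, (∀ j, j < i → lam j = bar j) ∧ bar i < lam i) →
        subres P (fun i : Fin n => derivative^[(i : ℕ) + 1] P) lam = 0) ∧
      subres P (fun i : Fin n => derivative^[(i : ℕ) + 1] P) bar ≠ 0 := by
  classical
  have hPdeg : P.natDegree = n := by
    rw [hP, natDegree_C_mul ha,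
      natDegree_prod _ _ (fun k _ => pow_ne_zero _ (X_sub_C_ne_zero (r k)))]
    simp only [natDegree_pow, natDegree_X_sub_C, mul_one]
    exact hsum
  have hP0 : P ≠ 0 := by
    intro h
    rw [h, natDegree_zero] at hPdeg
    omega
  have hiter := iter_facts P hPdeg hP0
  have hPne : ∀ i : ℕ, i ≤ n → derivative^[i] P ≠ 0 := fun i hi => (hiter i hi).2
  have hμn : ∀ k, μ k ≤ n := by
    intro k
    rw [← hsum]
    exact Finset.single_le_sum (fun _ _ => Nat.zero_le _) (mem_univ k)
  have hbase := root_base a ha r hr μ P hP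
  have hroot := root_iter r μ P hbase hPne hμn
  have hdvd4 := dvd_iter r μ P hroot
  have hconsF : (Fin.cons P (fun i : Fin n => derivative^[(i : ℕ) + 1] P) : Fin (n + 1) → ℂ[X])
      = fun i : Fin (n + 1) => derivative^[(i : ℕ)] P := by
    funext i
    refine Fin.cases ?_ ?_ i
    · rfl
    · intro j
      simp [Fin.cons_succ]
  have hbarle : ∀ j, bar j ≤ m := by
    intro j
    rw [hbar]
    exact le_trans (Finset.card_filter_le _ _) (by simp)
  constructor
  · -- vanishing for lexicographically larger partitions
    rintro lam hlanti hlsum ⟨i₀, hpre, hgt⟩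
    have hl0 : 1 ≤ lam ⟨0, by omega⟩ := by
      by_contra h
      push_neg at h
      have hall : ∀ i, lam i = 0 := by
        intro i
        have := hlanti (show (⟨0, by omega⟩ : Fin n) ≤ i by simp [Fin.le_def])
        omega
      rw [Finset.sum_eq_zero (fun i _ => hall i)] at hlsum
      omega
    have hl0' : 1 ≤ lam ⟨0, hn⟩ := hl0
    set z0 : Fin n := ⟨0, by omega⟩ with hz0
    have hz0v : (z0 : ℕ) = 0 := rfl
    set Ks := (univ.filter fun i : Fin n => lam i ≠ 0).sup
      (fun i => (n - ((i : ℕ) + 1)) + lam i) with hKs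
    have hupper : ∀ j : Fin n, lam j ≠ 0 → (n - ((j : ℕ) + 1)) + lam j ≤ Ks := by
      intro j hj
      rw [hKs]
      exact Finset.le_sup (f := fun i : Fin n => (n - ((i : ℕ) + 1)) + lam i)
        (mem_filter.2 ⟨mem_univ _, hj⟩)
    have hnK : n ≤ Ks := by
      have h1 := hupper z0 (by omega)
      rw [hz0v] at h1
      omega
    have hdelta : delta0 P.natDegree
        (fun i : Fin n => (derivative^[(i : ℕ) + 1] P).natDegree) lam = Ks - n := by
      rw [delta0, hPdeg]
      have hfun : (fun i : Fin n => (derivative^[(i : ℕ) + 1] P).natDegree + lam i)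
          = fun i : Fin n => (n - ((i : ℕ) + 1)) + lam i := by
        funext i
        rw [(hiter ((i : ℕ) + 1) (by omega)).1]
      rw [hfun, if_pos hnK]
    have hTeq : ∑ i', (Fin.cons (Ks - n) lam : Fin (n + 1) → ℕ) i' = (Ks - n) + n := by
      rw [Fin.sum_cons, hlsum]
    rw [subres_eq P _ lam (Ks - n) hdelta (by rw [hTeq, hPdeg])]
    rw [C_eq_zero, hconsF]
    set s := (i₀ : ℕ) + 1 with hsdef
    refine detA _ _ ?_ s (by omega) (∏ k, (X - C (r k)) ^ (μ k - s)) ?_ ?_ ?_ ?_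
    · -- degree bounds
      intro i
      refine Fin.cases ?_ ?_ i
      · intro _
        rw [hTeq, Fin.cons_zero]
        have : (derivative^[((0 : Fin (n + 1)) : ℕ)] P).natDegree = n := by
          simpa using hPdeg
        rw [this]
        omega
      · intro j hj
        rw [Fin.cons_succ] at hj ⊢
        rw [hTeq]
        have hd : (derivative^[((Fin.succ j : Fin (n + 1)) : ℕ)] P).natDegree = n - ((j : ℕ) + 1) := by
          rw [Fin.val_succ]
          exact (hiter ((j : ℕ) + 1) (by omega)).1
        rw [hd]
        have := hupper j hj
        omega
    · exact Monic.ne_zero (monic_prod_of_monic _ _ fun k _ => (monic_X_sub_C _).pow _)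
    · -- divisibility
      intro i his
      refine Finset.prod_dvd_of_coprime ?_ ?_
      · intro x _ y _ hxy
        exact ((Polynomial.pairwise_coprime_X_sub_C hr) hxy).pow
      · intro k _
        have hcase : derivative^[(i : ℕ)] P = (fun i : Fin (n + 1) => derivative^[(i : ℕ)] P) i := rfl
        exact (pow_dvd_pow _ (by omega : μ k - s ≤ μ k - (i : ℕ))).trans (hdvd4 k (i : ℕ))
    · -- degree of g small
      have hgdeg : (∏ k, (X - C (r k)) ^ (μ k - s)).natDegree = ∑ k, (μ k - s) := by
        rw [natDegree_prod _ _ (fun k _ => pow_ne_zero _ (X_sub_C_ne_zero (r k)))]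
        simp [natDegree_pow, natDegree_X_sub_C]
      rw [hgdeg, hTeq]
      have : ∑ k, (μ k - s) ≤ ∑ k, μ k := Finset.sum_le_sum fun k _ => Nat.sub_le _ _
      omega
    · -- the counting inequality
      have hgdeg : (∏ k, (X - C (r k)) ^ (μ k - s)).natDegree = ∑ k, (μ k - s) := by
        rw [natDegree_prod _ _ (fun k _ => pow_ne_zero _ (X_sub_C_ne_zero (r k)))]
        simp [natDegree_pow, natDegree_X_sub_C]
      have hsig := sig_cons (Ks - n) lam s (by omega)
      have hsplit_lam : ∑ j ∈ univ.filter (fun j : Fin n => (j : ℕ) < s), lam j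
          = (∑ j ∈ univ.filter (fun j : Fin n => (j : ℕ) < (i₀ : ℕ)), lam j) + lam i₀ := by
        rw [hsdef, filter_val_lt_succ (i₀ : ℕ) i₀.2, Finset.sum_insert (by simp)]
        simp [add_comm]
      have hsplit_bar : ∑ j ∈ univ.filter (fun j : Fin n => (j : ℕ) < s), bar j
          = (∑ j ∈ univ.filter (fun j : Fin n => (j : ℕ) < (i₀ : ℕ)), bar j) + bar i₀ := by
        rw [hsdef, filter_val_lt_succ (i₀ : ℕ) i₀.2, Finset.sum_insert (by simp)]
        simp [add_comm]
      have hlam_bar : ∑ j ∈ univ.filter (fun j : Fin n => (j : ℕ) < (i₀ : ℕ)), lam j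
          = ∑ j ∈ univ.filter (fun j : Fin n => (j : ℕ) < (i₀ : ℕ)), bar j := by
        apply Finset.sum_congr rfl
        intro j hj
        exact hpre j (Fin.lt_def.2 (mem_filter.1 hj).2)
      have hbar_min := bar_count μ bar hbar s (by omega)
      have hminsum : ∑ k, min s (μ k) + ∑ k, (μ k - s) = n := by
        rw [← Finset.sum_add_distrib, ← hsum]
        exact Finset.sum_congr rfl fun k _ => by omega
      rw [hTeq, hsig, hgdeg]
      rw [hbar_min] at hsplit_bar
      omega
  · -- nonvanishing at the conjugate partition
    set z0 : Fin n := ⟨0, by omega⟩ with hz0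
    have hz0v : (z0 : ℕ) = 0 := rfl
    have hbar0 : bar z0 = m := by
      rw [hbar]
      rw [Finset.filter_true_of_mem (fun j _ => by
        rw [hz0v]
        have := hpos j
        omega)]
      rw [card_univ, Fintype.card_fin]
    have hbar_sum : ∑ j, bar j = n := by
      have h1 := bar_count μ bar hbar n le_rfl
      rw [filter_val_lt_of_le le_rfl] at h1
      rw [h1, ← hsum]
      exact Finset.sum_congr rfl fun k _ => by have := hμn k; omega
    set Ks := (univ.filter fun i : Fin n => bar i ≠ 0).sup
      (fun i => (n - ((i : ℕ) + 1)) + bar i) with hKs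
    have hKval : Ks = n + m - 1 := by
      apply le_antisymm
      · rw [hKs]
        apply Finset.sup_le
        intro j _
        have := hbarle j
        omega
      · have h1 : (n - ((z0 : ℕ) + 1)) + bar z0 ≤ Ks := by
          rw [hKs]
          exact Finset.le_sup (f := fun i : Fin n => (n - ((i : ℕ) + 1)) + bar i)
            (mem_filter.2 ⟨mem_univ _, by omega⟩)
        rw [hz0v] at h1
        omega
    have hnK : n ≤ Ks := by omega
    have hdelta : delta0 P.natDegree
        (fun i : Fin n => (derivative^[(i : ℕ) + 1] P).natDegree) bar = m - 1 := by
      rw [delta0, hPdeg]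
      have hfun : (fun i : Fin n => (derivative^[(i : ℕ) + 1] P).natDegree + bar i)
          = fun i : Fin n => (n - ((i : ℕ) + 1)) + bar i := by
        funext i
        rw [(hiter ((i : ℕ) + 1) (by omega)).1]
      rw [hfun, if_pos hnK]
      omega
    have hTeq : ∑ i', (Fin.cons (m - 1) bar : Fin (n + 1) → ℕ) i' = (m - 1) + n := by
      rw [Fin.sum_cons, hbar_sum]
    rw [subres_eq P _ bar (m - 1) hdelta (by rw [hTeq, hPdeg])]
    rw [hconsF]
    intro hCzero
    refine detB r hr μ P hP0 hPne hroot hdvd4 _ ?_ ?_ (C_eq_zero.1 hCzero)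
    · -- block size bound
      intro i
      refine Fin.cases ?_ ?_ i
      · intro h0
        simp at h0
      · intro j _
        rw [Fin.cons_succ, hbar j]
        apply le_of_eq
        rfl
    · -- degree bounds
      intro i
      refine Fin.cases ?_ ?_ i
      · intro _
        rw [hTeq, Fin.cons_zero]
        have : (derivative^[((0 : Fin (n + 1)) : ℕ)] P).natDegree = n := by
          simpa using hPdeg
        rw [this]
        omega
      · intro j hj
        rw [Fin.cons_succ] at hj ⊢
        rw [hTeq]
        have hd : (derivative^[((Fin.succ j : Fin (n + 1)) : ℕ)] P).natDegree
            = n - ((j : ℕ) + 1) := by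
          rw [Fin.val_succ]
          exact (hiter ((j : ℕ) + 1) (by omega)).1
        rw [hd]
        have := hbarle j
        omega
end

section
/- Let P be a polynomial over ℂ of degree n with multiplicity vector μ and conjugate μ̄ = (μ̄_1,…,μ̄_n). Then for each i ≥ 1, the subresultant R_{(μ̄_1,…,μ̄_i)}(P^(0), P^(1), …, P^(i)) is a nonzero constant multiple of gcd(P^(0), P^(1), …, P^(i)). -/
open Polynomial Finset

namespace Stmt14Aux

open Matrix

variable {p q : ℕ}

/-- full row polynomial -/
noncomputable def RP (M : Matrix (Fin p) (Fin q) ℂ) (x : Fin p) : ℂ[X] :=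
  ∑ j : Fin q, C (M x j) * X ^ (q - 1 - (j : ℕ))

/-- truncated row polynomial -/
noncomputable def trunc (M : Matrix (Fin p) (Fin q) ℂ) (x : Fin p) : ℂ[X] :=
  ∑ j : Fin q, if p - 1 ≤ (j : ℕ) then C (M x j) * X ^ (q - 1 - (j : ℕ)) else 0

noncomputable def Dm (M : Matrix (Fin p) (Fin q) ℂ) : Matrix (Fin p) (Fin p) ℂ[X] :=
  Matrix.of fun x c : Fin p =>
    if hc : (c : ℕ) < min (p - 1) q then C (M x ⟨c, (lt_min_iff.mp hc).2⟩)
    else trunc M x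

lemma detPoly_eq_det_Dm (M : Matrix (Fin p) (Fin q) ℂ) : detPoly M = (Dm M).det := rfl

/-- the last column index -/
def Lc (hp : 1 ≤ p) : Fin p := ⟨p - 1, by omega⟩

lemma coeff_intCast_mul (n : ℤ) (f : ℂ[X]) (k : ℕ) :
    (((n : ℂ[X])) * f).coeff k = (n : ℂ) * f.coeff k := by
  rw [← C_eq_intCast, coeff_C_mul]

lemma Dm_apply_lt (M : Matrix (Fin p) (Fin q) ℂ) (x c : Fin p) (hpq : p ≤ q)
    (h : (c : ℕ) < p - 1) :
    Dm M x c = C (M x ⟨(c : ℕ), by omega⟩) := by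
  have h' : (c : ℕ) < min (p - 1) q := by omega
  simp only [Dm, Matrix.of_apply, dif_pos h']

lemma Dm_apply_last (hp : 1 ≤ p) (M : Matrix (Fin p) (Fin q) ℂ) (x : Fin p) :
    Dm M x (Lc hp) = trunc M x := by
  have hv : (Lc hp : ℕ) = p - 1 := rfl
  have h' : ¬ ((Lc hp : ℕ) < min (p - 1) q) := by omega
  simp only [Dm, Matrix.of_apply, dif_neg h']

lemma trunc_eq_filter (M : Matrix (Fin p) (Fin q) ℂ) (x : Fin p) :
    trunc M x = ∑ j ∈ univ.filter (fun j : Fin q => p - 1 ≤ (j : ℕ)),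
      C (M x j) * X ^ (q - 1 - (j : ℕ)) := by
  rw [trunc, Finset.sum_filter]

lemma RP_eq_sum_smul (hp : 1 ≤ p) (hpq : p ≤ q) (M : Matrix (Fin p) (Fin q) ℂ) (x : Fin p) :
    RP M x = ∑ c : Fin p,
      (if (c : ℕ) < p - 1 then (X : ℂ[X]) ^ (q - 1 - (c : ℕ)) else 1) • Dm M x c := by
  have hsplit := Finset.sum_filter_add_sum_filter_not univ
    (fun j : Fin q => p - 1 ≤ (j : ℕ)) (fun j : Fin q => C (M x j) * X ^ (q - 1 - (j : ℕ)))
  have hRP : RP M x = trunc M x +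
      ∑ j ∈ univ.filter (fun j : Fin q => ¬ (p - 1 ≤ (j : ℕ))),
        C (M x j) * X ^ (q - 1 - (j : ℕ)) := by
    rw [RP, ← hsplit, trunc_eq_filter]
  rw [hRP]
  have hsplit2 := Finset.sum_filter_add_sum_filter_not univ
    (fun c : Fin p => (c : ℕ) < p - 1)
    (fun c : Fin p =>
      (if (c : ℕ) < p - 1 then (X : ℂ[X]) ^ (q - 1 - (c : ℕ)) else 1) • Dm M x c)
  rw [← hsplit2]
  have h1 : ∑ c ∈ univ.filter (fun c : Fin p => (c : ℕ) < p - 1),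
      (if (c : ℕ) < p - 1 then (X : ℂ[X]) ^ (q - 1 - (c : ℕ)) else 1) • Dm M x c
      = ∑ j ∈ univ.filter (fun j : Fin q => ¬ (p - 1 ≤ (j : ℕ))),
        C (M x j) * X ^ (q - 1 - (j : ℕ)) := by
    refine Finset.sum_nbij' (fun c => Fin.castLE hpq c)
      (fun j => ⟨min (j : ℕ) (p - 1), by omega⟩) ?_ ?_ ?_ ?_ ?_
    · intro c hc; simp only [mem_filter, mem_univ, true_and] at hc ⊢
      simp only [Fin.coe_castLE]; omega
    · intro j hj; simp only [mem_filter, mem_univ, true_and] at hj ⊢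
      simp only [not_le] at hj; simpa using by omega
    · intro c hc; simp only [mem_filter, mem_univ, true_and] at hc
      apply Fin.ext; simp only [Fin.coe_castLE]; omega
    · intro j hj; simp only [mem_filter, mem_univ, true_and, not_le] at hj
      apply Fin.ext; simp only [Fin.coe_castLE]; omega
    · intro c hc; simp only [mem_filter, mem_univ, true_and] at hc
      rw [if_pos hc, Dm_apply_lt M x c hpq hc]
      simp only [smul_eq_mul, Fin.coe_castLE]
      rw [mul_comm]
      congr 1
  have h2 : ∑ c ∈ univ.filter (fun c : Fin p => ¬ ((c : ℕ) < p - 1)),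
      (if (c : ℕ) < p - 1 then (X : ℂ[X]) ^ (q - 1 - (c : ℕ)) else 1) • Dm M x c
      = trunc M x := by
    have hfe : univ.filter (fun c : Fin p => ¬ ((c : ℕ) < p - 1)) = {Lc hp} := by
      ext c; simp only [mem_filter, mem_univ, true_and, mem_singleton, Fin.ext_iff, Lc]
      have := c.2; omega
    have hvL : ¬ ((Lc hp : ℕ) < p - 1) := by
      have : (Lc hp : ℕ) = p - 1 := rfl; omega
    rw [hfe, Finset.sum_singleton, if_neg hvL, one_smul, Dm_apply_last hp]
  rw [h1, h2, add_comm]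

lemma det_Dm_eq_updateCol (hp : 1 ≤ p) (hpq : p ≤ q) (M : Matrix (Fin p) (Fin q) ℂ) :
    ((Dm M).updateCol (Lc hp) (RP M)).det = (Dm M).det := by
  have h : RP M = fun x => ∑ c : Fin p,
      (fun c : Fin p => if (c : ℕ) < p - 1 then (X : ℂ[X]) ^ (q - 1 - (c : ℕ)) else 1) c
        • Dm M x c := by
    funext x; exact RP_eq_sum_smul hp hpq M x
  have hvL : ¬ ((Lc hp : ℕ) < p - 1) := by
    have : (Lc hp : ℕ) = p - 1 := rfl; omega
  rw [h, Matrix.det_updateCol_sum]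
  simp only [if_neg hvL, one_smul]

lemma dvd_detPoly (hp : 1 ≤ p) (hpq : p ≤ q) {G : ℂ[X]} (M : Matrix (Fin p) (Fin q) ℂ)
    (hG : ∀ x, G ∣ RP M x) : G ∣ detPoly M := by
  rw [detPoly_eq_det_Dm, ← det_Dm_eq_updateCol hp hpq, Matrix.det_apply']
  refine Finset.dvd_sum fun σ _ => ?_
  refine Dvd.dvd.mul_left ?_ _
  rw [← Finset.mul_prod_erase univ _ (Finset.mem_univ (Lc hp))]
  refine Dvd.dvd.mul_right ?_ _
  rw [Matrix.updateCol_self]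
  exact hG _

lemma natDegree_detPoly_le (hp : 1 ≤ p) (hpq : p ≤ q) (M : Matrix (Fin p) (Fin q) ℂ) :
    (detPoly M).natDegree ≤ q - p := by
  rw [detPoly_eq_det_Dm, Matrix.det_apply']
  refine natDegree_sum_le_of_forall_le _ _ fun σ _ => ?_
  refine (natDegree_mul_le).trans ?_
  have h1 : (((Equiv.Perm.sign σ : ℤ) : ℂ[X])).natDegree = 0 := by
    rw [← C_eq_intCast]; exact natDegree_C _
  rw [h1, zero_add]
  rw [← Finset.mul_prod_erase univ _ (Finset.mem_univ (Lc hp))]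
  refine (natDegree_mul_le).trans ?_
  have h2 : (Dm M (σ (Lc hp)) (Lc hp)).natDegree ≤ q - p := by
    rw [Dm_apply_last hp]
    refine natDegree_sum_le_of_forall_le _ _ fun j _ => ?_
    split_ifs with hj
    · refine (natDegree_mul_le).trans ?_
      rw [natDegree_C, natDegree_X_pow]
      have := j.2; omega
    · simp
  have h3 : (∏ c ∈ univ.erase (Lc hp), Dm M (σ c) c).natDegree ≤ 0 := by
    refine (natDegree_prod_le _ _).trans ?_
    refine le_of_eq (Finset.sum_eq_zero fun c hc => ?_)
    have hne : c ≠ Lc hp := (Finset.mem_erase.mp hc).1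
    have hlt : (c : ℕ) < p - 1 := by
      have h4 : (c : ℕ) ≠ p - 1 := fun h => hne (Fin.ext h)
      have := c.2; omega
    rw [Dm_apply_lt M _ c hpq hlt, natDegree_C]
  omega

lemma coeff_detPoly (hp : 1 ≤ p) (hpq : p ≤ q) (M : Matrix (Fin p) (Fin q) ℂ) :
    (detPoly M).coeff (q - p) =
      Matrix.det (Matrix.of fun x c : Fin p => M x (Fin.castLE hpq c)) := by
  rw [detPoly_eq_det_Dm, Matrix.det_apply', Matrix.det_apply', finset_sum_coeff]
  refine Finset.sum_congr rfl fun σ _ => ?_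
  rw [coeff_intCast_mul]
  congr 1
  rw [← Finset.mul_prod_erase univ _ (Finset.mem_univ (Lc hp))]
  rw [← Finset.mul_prod_erase univ
    (fun c => (Matrix.of fun x c : Fin p => M x (Fin.castLE hpq c)) (σ c) c)
    (Finset.mem_univ (Lc hp))]
  have h2 : ∏ c ∈ univ.erase (Lc hp), Dm M (σ c) c
      = C (∏ c ∈ univ.erase (Lc hp), M (σ c) (Fin.castLE hpq c)) := by
    rw [map_prod]
    refine Finset.prod_congr rfl fun c hc => ?_
    have hne : c ≠ Lc hp := (Finset.mem_erase.mp hc).1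
    have hlt : (c : ℕ) < p - 1 := by
      have h4 : (c : ℕ) ≠ p - 1 := fun h => hne (Fin.ext h)
      have := c.2; omega
    rw [Dm_apply_lt M _ c hpq hlt]
    congr 1
  rw [h2, Dm_apply_last hp, coeff_mul_C]
  have h3 : (trunc M (σ (Lc hp))).coeff (q - p) = M (σ (Lc hp)) ⟨p - 1, by omega⟩ := by
    simp only [trunc, finset_sum_coeff]
    refine (Finset.sum_eq_single (⟨p - 1, by omega⟩ : Fin q) ?_ ?_).trans ?_
    · intro j _ hj
      have hjv : (j : ℕ) ≠ p - 1 := fun h => hj (Fin.ext h)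
      split_ifs with hle
      · rw [coeff_C_mul, coeff_X_pow, if_neg (by have := j.2; omega), mul_zero]
      · exact coeff_zero _
    · intro h; exact absurd (Finset.mem_univ _) h
    · rw [if_pos (by simp), coeff_C_mul, coeff_X_pow, if_pos (by simp; omega), mul_one]
  have h4 : (Fin.castLE hpq (Lc hp)) = (⟨p - 1, by omega⟩ : Fin q) := by
    apply Fin.ext; simp [Lc]
  rw [h3]
  simp only [Matrix.of_apply, h4]



section PolyFacts

variable {m : ℕ} {r : Fin m → ℂ}

lemma eval_prod_pow_ne_zero (hr : Function.Injective r) (e : Fin m → ℕ) (k : Fin m)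
    (s : Finset (Fin m)) (hk : k ∉ s) :
    (∏ k' ∈ s, (X - C (r k')) ^ e k').eval (r k) ≠ 0 := by
  rw [eval_prod]
  refine Finset.prod_ne_zero_iff.mpr fun k' hk' => ?_
  rw [eval_pow, eval_sub, eval_X, eval_C]
  exact pow_ne_zero _ (sub_ne_zero.mpr (fun h => hk (hr h ▸ hk')))

lemma prod_pow_ne_zero (e : Fin m → ℕ) (s : Finset (Fin m)) :
    (∏ k' ∈ s, (X - C (r k')) ^ e k') ≠ 0 :=
  Finset.prod_ne_zero_iff.mpr fun k' _ => pow_ne_zero _ (X_sub_C_ne_zero _)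

lemma rootMult_prod (hr : Function.Injective r) (e : Fin m → ℕ) (k : Fin m) :
    rootMultiplicity (r k) (∏ k', (X - C (r k')) ^ e k') = e k := by
  rw [← Finset.mul_prod_erase univ _ (Finset.mem_univ k)]
  rw [rootMultiplicity_mul (by
    exact mul_ne_zero (pow_ne_zero _ (X_sub_C_ne_zero _)) (prod_pow_ne_zero e _))]
  rw [rootMultiplicity_X_sub_C_pow]
  rw [rootMultiplicity_eq_zero (by
    simp only [IsRoot.def]
    exact eval_prod_pow_ne_zero hr e k _ (Finset.notMem_erase k univ))]
  omega

lemma natDegree_prod_pow (e : Fin m → ℕ) :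
    (∏ k', (X - C (r k')) ^ e k' : ℂ[X]).natDegree = ∑ k', e k' := by
  rw [natDegree_prod _ _ (fun k' _ => pow_ne_zero _ (X_sub_C_ne_zero _))]
  exact Finset.sum_congr rfl fun k' _ => by
    rw [(monic_X_sub_C (r k')).natDegree_pow, natDegree_X_sub_C, mul_one]

end PolyFacts

lemma deriv_facts (f : ℂ[X]) (hf : f ≠ 0) : ∀ i, i ≤ f.natDegree →
    derivative^[i] f ≠ 0 ∧ (derivative^[i] f).natDegree = f.natDegree - i := by
  intro i
  induction i with
  | zero => intro _; simpa using hf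
  | succ i ih =>
    intro hi
    obtain ⟨h1, h2⟩ := ih (by omega)
    rw [Function.iterate_succ_apply']
    set g := derivative^[i] f with hg
    have hd1 : 1 ≤ g.natDegree := by omega
    have hcast : ((g.natDegree - 1 : ℕ) : ℂ) + 1 = (g.natDegree : ℂ) := by
      rw [Nat.cast_sub hd1]; push_cast; ring
    have hc : (derivative g).coeff (g.natDegree - 1) = g.coeff g.natDegree * g.natDegree := by
      rw [coeff_derivative, show g.natDegree - 1 + 1 = g.natDegree by omega, hcast]
    have hne : (derivative g).coeff (g.natDegree - 1) ≠ 0 := by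
      rw [hc]
      refine mul_ne_zero ?_ (Nat.cast_ne_zero.mpr (by omega))
      exact fun h0 => h1 (leadingCoeff_eq_zero.mp h0)
    constructor
    · intro h; rw [h] at hne; simp at hne
    · have hub := natDegree_derivative_le g
      have hlb : g.natDegree - 1 ≤ (derivative g).natDegree := le_natDegree_of_ne_zero hne
      omega

lemma sum_C_coeff {q : ℕ} (g : ℂ[X]) (hq0 : g.natDegree < q) :
    ∑ j : Fin q, C (g.coeff (q - 1 - (j : ℕ))) * X ^ (q - 1 - (j : ℕ)) = g := by
  rw [Fin.sum_univ_eq_sum_range (fun x => C (g.coeff (q - 1 - x)) * X ^ (q - 1 - x)) q]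
  rw [Finset.sum_range_reflect (fun x => C (g.coeff x) * X ^ x) q]
  conv_rhs => rw [g.as_sum_range' q hq0]
  exact Finset.sum_congr rfl fun x _ => C_mul_X_pow_eq_monomial

lemma exists_block (δn : ℕ → ℕ) (N x : ℕ) (hx : x < ∑ i ∈ range N, δn i) :
    ∃ i, i < N ∧ (∑ i' ∈ range i, δn i') ≤ x ∧ x < (∑ i' ∈ range i, δn i') + δn i := by
  induction N with
  | zero => simp at hx
  | succ N ih =>
    by_cases h : x < ∑ i ∈ range N, δn i
    · obtain ⟨i, hi, h1, h2⟩ := ih h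
      exact ⟨i, by omega, h1, h2⟩
    · rw [Finset.sum_range_succ] at hx
      exact ⟨N, by omega, by omega, by omega⟩

lemma block_mono (δn : ℕ → ℕ) {i j : ℕ} (hij : i < j) :
    (∑ i' ∈ range i, δn i') + δn i ≤ ∑ i' ∈ range j, δn i' := by
  have : (∑ i' ∈ range i, δn i') + δn i = ∑ i' ∈ range (i + 1), δn i' :=
    (Finset.sum_range_succ _ _).symm
  rw [this]
  exact Finset.sum_le_sum_of_subset (Finset.range_subset_range.mpr (by omega))

lemma filter_lt_sum {N : ℕ} (f : Fin N → ℕ) (i : Fin N) :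
    ∑ i' ∈ univ.filter (fun i' => i' < i), f i'
      = ∑ x ∈ range (i : ℕ), (if h : x < N then f ⟨x, h⟩ else 0) := by
  refine Finset.sum_nbij' (fun i' => (i' : ℕ))
    (fun x => ⟨min x (i : ℕ), by have := i.isLt; omega⟩) ?_ ?_ ?_ ?_ ?_
  · intro i' hi'
    simp only [mem_filter, mem_univ, true_and, Fin.lt_def] at hi'
    simpa using hi'
  · intro x hx
    simp only [mem_range] at hx
    simp only [mem_filter, mem_univ, true_and, Fin.lt_def]
    simpa using by omega
  · intro i' hi'
    simp only [mem_filter, mem_univ, true_and, Fin.lt_def] at hi'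
    apply Fin.ext
    simpa using by omega
  · intro x hx
    simp only [mem_range] at hx
    simpa using by omega
  · intro i' hi'
    rw [dif_pos i'.isLt, Fin.eta]


lemma coeff_RP {p q : ℕ} (M : Matrix (Fin p) (Fin q) ℂ) (x : Fin p) (j : Fin q) :
    (RP M x).coeff (q - 1 - (j : ℕ)) = M x j := by
  rw [RP, finset_sum_coeff]
  refine (Finset.sum_eq_single j ?_ ?_).trans ?_
  · intro j' _ hj'
    rw [coeff_C_mul, coeff_X_pow, if_neg, mul_zero]
    have h1 := j.2
    have h2 := j'.2
    have h3 : (j' : ℕ) ≠ (j : ℕ) := fun h => hj' (Fin.ext h)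
    omega
  · intro h; exact absurd (mem_univ _) h
  · rw [coeff_C_mul, coeff_X_pow, if_pos rfl, mul_one]

lemma natDegree_RP_le {p q : ℕ} (M : Matrix (Fin p) (Fin q) ℂ) (x : Fin p) :
    (RP M x).natDegree ≤ q - 1 := by
  rw [RP]
  refine natDegree_sum_le_of_forall_le _ _ fun j _ => ?_
  refine natDegree_mul_le.trans ?_
  rw [natDegree_C, natDegree_X_pow]
  omega

lemma sum_ite_min (c N : ℕ) :
    (∑ x ∈ range N, (if x + 1 ≤ c then 1 else 0)) = min c N := by
  induction N with
  | zero => simp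
  | succ N ih =>
    rw [Finset.sum_range_succ, ih]
    by_cases h : N + 1 ≤ c <;> simp [h] <;> omega

end Stmt14Aux

/-- Main theorem (incremental gcd via non-nested subresultants): for `P` over `ℂ` of
degree `n` with multiplicity vector `μ` and conjugate `μ̄`, for each `1 ≤ i ≤ n` the
subresultant `R_{(μ̄_1,…,μ̄_i)}(P⁽⁰⁾, …, P⁽ⁱ⁾)` is a nonzero constant multiple of
`gcd(P⁽⁰⁾, …, P⁽ⁱ⁾)`. -/
theorem stmt_14 {n m : ℕ} (hn : 1 ≤ n) (hm : 0 < m) (a : ℂ) (ha : a ≠ 0)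
    (r : Fin m → ℂ) (hr : Function.Injective r) (μ : Fin m → ℕ) (hanti : Antitone μ)
    (hpos : ∀ j, 1 ≤ μ j) (hsum : ∑ j, μ j = n) (P : ℂ[X])
    (hP : P = C a * ∏ k, (X - C (r k)) ^ μ k)
    (bar : ℕ → ℕ)
    (hbar : ∀ i, bar i = (Finset.univ.filter fun j => i ≤ μ j).card) :
    ∀ i : ℕ, 1 ≤ i → i ≤ n →
      ∃ c : ℂ, c ≠ 0 ∧
        subres P (fun j : Fin i => derivative^[(j : ℕ) + 1] P)
            (fun j : Fin i => bar ((j : ℕ) + 1))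
          = C c * Finset.gcd (Finset.range (i + 1)) (fun j => derivative^[j] P) := by
  intro t ht1 htn
  classical
  open Stmt14Aux in
  have hPne : P ≠ 0 := by
    rw [hP]; exact mul_ne_zero (C_ne_zero.mpr ha) (prod_pow_ne_zero μ _)
  have hdegP : P.natDegree = n := by
    rw [hP, natDegree_C_mul ha, natDegree_prod_pow, hsum]
  have hD : ∀ i : ℕ, i ≤ n → derivative^[i] P ≠ 0 ∧ (derivative^[i] P).natDegree = n - i := by
    intro i hi
    have h := Stmt14Aux.deriv_facts P hPne i (by omega)
    rwa [hdegP] at h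
  have hμn : ∀ k, μ k ≤ n := fun k => by
    rw [← hsum]; exact Finset.single_le_sum (f := μ) (fun _ _ => Nat.zero_le _) (mem_univ k)
  have hrootP : ∀ k, rootMultiplicity (r k) P = μ k := by
    intro k
    conv_lhs => rw [hP]
    rw [rootMultiplicity_mul (by rw [← hP]; exact hPne), rootMultiplicity_C,
      Stmt14Aux.rootMult_prod hr, zero_add]
  have hrootD : ∀ (k : Fin m) (i : ℕ), i ≤ μ k →
      rootMultiplicity (r k) (derivative^[i] P) = μ k - i := by
    intro k i
    induction i with
    | zero => intro _; simpa using hrootP k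
    | succ i ih =>
      intro hi
      have hprev := ih (by omega)
      have hne := (hD i (by have := hμn k; omega)).1
      have hroot : IsRoot (derivative^[i] P) (r k) := (rootMultiplicity_pos hne).mp (by omega)
      rw [Function.iterate_succ_apply', derivative_rootMultiplicity_of_root hroot, hprev]
      omega
  have hbar1 : bar 1 = m := by
    rw [hbar, Finset.filter_true_of_mem (fun j _ => hpos j)]
    simp
  have hbarm : ∀ s, bar s ≤ m := fun s => by
    rw [hbar]; exact le_trans (Finset.card_filter_le _ _) (by simp)
  set H : ℂ[X] := ∏ k, (X - C (r k)) ^ (μ k - t) with hHdef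
  have hHne : H ≠ 0 := prod_pow_ne_zero _ _
  have hHdeg : H.natDegree = ∑ k, (μ k - t) := natDegree_prod_pow _
  have hHdvd : ∀ i : ℕ, i ≤ t → H ∣ derivative^[i] P := by
    intro i hi
    refine Finset.prod_dvd_of_coprime (fun k _ k' hk' hkk' => ?_) (fun k _ => ?_)
    · exact (pairwise_coprime_X_sub_C hr hkk').pow
    · have hle : μ k - t ≤ rootMultiplicity (r k) (derivative^[i] P) := by
        by_cases hc : i ≤ μ k
        · rw [hrootD k i hc]; omega
        · omega
      exact (pow_dvd_pow _ hle).trans (pow_rootMultiplicity_dvd _ _)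
  have hgcd : ∃ c₀ : ℂ, c₀ ≠ 0 ∧
      Finset.gcd (Finset.range (t + 1)) (fun j => derivative^[j] P) = C c₀ * H := by
    set G := Finset.gcd (Finset.range (t + 1)) (fun j => derivative^[j] P) with hGdef
    have hGne : G ≠ 0 := by
      intro h0
      exact hPne (by simpa using Finset.gcd_eq_zero_iff.mp h0 0 (by simp))
    have hHG : H ∣ G :=
      Finset.dvd_gcd fun b hb => hHdvd b (by have := Finset.mem_range.mp hb; omega)
    obtain ⟨w, hw⟩ := hHG
    have hwne : w ≠ 0 := fun h => hGne (by rw [hw, h, mul_zero])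
    have hGroot : ∀ k, rootMultiplicity (r k) G ≤ μ k - t := by
      intro k
      have hj1 : min t (μ k) ≤ t := min_le_left _ _
      have hdvd' : G ∣ derivative^[min t (μ k)] P := by
        rw [hGdef]
        exact Finset.gcd_dvd (by simp only [Finset.mem_range]; omega)
      have hne' : derivative^[min t (μ k)] P ≠ 0 := (hD _ (by have := hμn k; omega)).1
      have h5 : rootMultiplicity (r k) G ≤ rootMultiplicity (r k) (derivative^[min t (μ k)] P) :=
        (le_rootMultiplicity_iff hne').mpr ((pow_rootMultiplicity_dvd G (r k)).trans hdvd')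
      rw [hrootD k _ (min_le_right _ _)] at h5
      omega
    have hwroot : ∀ k, rootMultiplicity (r k) w = 0 := by
      intro k
      have h6 := hGroot k
      rw [hw, rootMultiplicity_mul (by rw [← hw]; exact hGne)] at h6
      have hH : rootMultiplicity (r k) H = μ k - t := Stmt14Aux.rootMult_prod hr _ k
      omega
    have hwdeg : w.natDegree = 0 := by
      by_contra h0
      have hwd : 0 < w.degree := natDegree_pos_iff_degree_pos.mp (by omega)
      obtain ⟨z, hz⟩ := Complex.exists_root hwd
      have hzG : eval z G = 0 := by
        rw [hw, eval_mul]
        exact mul_eq_zero_of_right _ hz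
      have hGP : G ∣ P := by
        have h7 : G ∣ derivative^[0] P := by
          rw [hGdef]; exact Finset.gcd_dvd (by simp)
        simpa using h7
      obtain ⟨y, hy⟩ := hGP
      have hzP : eval z P = 0 := by rw [hy, eval_mul, hzG, zero_mul]
      have hex : ∃ k, z = r k := by
        rw [hP, eval_mul, eval_C, eval_prod] at hzP
        rcases mul_eq_zero.mp hzP with h | h
        · exact absurd h ha
        · obtain ⟨k, _, hk⟩ := Finset.prod_eq_zero_iff.mp h
          rw [eval_pow, eval_sub, eval_X, eval_C] at hk
          have := pow_eq_zero_iff (by have := hpos k; omega : μ k ≠ 0) |>.mp hk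
          exact ⟨k, sub_eq_zero.mp this⟩
      obtain ⟨k, rfl⟩ := hex
      have h8 : 0 < rootMultiplicity (r k) w := (rootMultiplicity_pos hwne).mpr hz
      rw [hwroot k] at h8
      omega
    refine ⟨w.coeff 0, ?_, ?_⟩
    · intro h0
      exact hwne (by rw [eq_C_of_natDegree_eq_zero hwdeg, h0, map_zero])
    · rw [hw]
      conv_lhs => rw [eq_C_of_natDegree_eq_zero hwdeg]
      ring
  -- set up the subresultant data
  set δf : Fin t → ℕ := fun j => bar ((j : ℕ) + 1) with hδf
  set Ff : Fin t → ℂ[X] := fun j => derivative^[(j : ℕ) + 1] P with hFf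
  have hFfdeg : ∀ j : Fin t, (Ff j).natDegree = n - ((j : ℕ) + 1) := fun j =>
    (hD ((j : ℕ) + 1) (by have := j.isLt; omega)).2
  set d0 := P.natDegree with hd0def
  have hd0n : d0 = n := hdegP
  set δ0 := delta0 d0 (fun i => (Ff i).natDegree) δf with hδ0def
  have hδ0 : δ0 = m - 1 := by
    have ht0 : (0 : ℕ) < t := ht1
    have hz : (⟨0, ht0⟩ : Fin t) ∈ univ.filter (fun i => δf i ≠ 0) := by
      simp only [Finset.mem_filter, Finset.mem_univ, true_and, hδf]
      show bar (0 + 1) ≠ 0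
      rw [show (0:ℕ) + 1 = 1 from rfl, hbar1]
      omega
    have hsup : (univ.filter (fun i => δf i ≠ 0)).sup
        (fun i => (Ff i).natDegree + δf i) = n - 1 + m := by
      refine le_antisymm (Finset.sup_le fun j _ => ?_) (le_trans ?_ (Finset.le_sup hz))
      · have h1 := hFfdeg j
        have h2 : δf j ≤ m := hbarm _
        have := j.isLt
        omega
      · have h1 := hFfdeg ⟨0, ht0⟩
        have h2 : δf ⟨0, ht0⟩ = m := by
          show bar (0 + 1) = m
          rw [show (0:ℕ) + 1 = 1 from rfl, hbar1]
        have h3 : ((⟨0, ht0⟩ : Fin t) : ℕ) = 0 := rfl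
        show n - 1 + m ≤ (Ff ⟨0, ht0⟩).natDegree + δf ⟨0, ht0⟩
        rw [h1, h2, h3]
    rw [hδ0def]
    simp only [delta0]
    rw [hsup, hd0n, if_pos (by omega)]
    omega
  set δ' : Fin (t + 1) → ℕ := Fin.cons δ0 δf with hδ'
  set F' : Fin (t + 1) → ℂ[X] := Fin.cons P Ff with hF'
  set q := δ0 + d0 with hqdef
  set p := ∑ i, δ' i with hpdef
  have hq : q = m - 1 + n := by rw [hqdef, hδ0, hd0n]
  have hminsum : ∑ j : Fin t, δf j = ∑ k, min (μ k) t := by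
    have h1 : ∀ j : Fin t, δf j = ∑ k, (if (j : ℕ) + 1 ≤ μ k then 1 else 0) := by
      intro j
      rw [hδf]
      show bar ((j : ℕ) + 1) = _
      rw [hbar, Finset.card_filter]
    rw [Finset.sum_congr rfl fun j _ => h1 j, Finset.sum_comm]
    refine Finset.sum_congr rfl fun k _ => ?_
    rw [Fin.sum_univ_eq_sum_range (fun x => if x + 1 ≤ μ k then 1 else 0) t]
    exact Stmt14Aux.sum_ite_min _ _
  have hpsum : p = (m - 1) + ∑ k, min (μ k) t := by
    rw [hpdef, hδ', Fin.sum_cons, hδ0, hminsum]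
  have hp1 : 1 ≤ p := by
    have h1 : ∀ k, 1 ≤ min (μ k) t := fun k => by have := hpos k; omega
    have hsm : m ≤ ∑ k, min (μ k) t := by
      calc m = ∑ _k : Fin m, 1 := by simp
      _ ≤ _ := Finset.sum_le_sum fun k _ => h1 k
    omega
  have hqp : p + ∑ k, (μ k - t) = q := by
    rw [hpsum, hq]
    have h1 : (∑ k, min (μ k) t) + ∑ k, (μ k - t) = n := by
      rw [← Finset.sum_add_distrib, ← hsum]
      exact Finset.sum_congr rfl fun k _ => by omega
    omega
  have hpq : p ≤ q := by omega
  have hHdeg' : H.natDegree = q - p := by rw [hHdeg]; omega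
  set offF : Fin (t + 1) → ℕ :=
    fun i => ∑ i' ∈ Finset.univ.filter (fun i' => i' < i), δ' i' with hoffF
  set δn : ℕ → ℕ := fun x => if h : x < t + 1 then δ' ⟨x, h⟩ else 0 with hδn
  set MS : Matrix (Fin p) (Fin q) ℂ := Matrix.of fun (x : Fin p) (c : Fin q) =>
    ∑ i : Fin (t + 1),
      if offF i ≤ (x : ℕ) ∧ (x : ℕ) < offF i + δ' i then
        (X ^ (δ' i - 1 - ((x : ℕ) - offF i)) * F' i).coeff (q - 1 - (c : ℕ))
      else 0 with hMS
  have hsubres : subres P Ff δf = detPoly MS := rfl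
  have hδnδ' : ∀ i : Fin (t + 1), δ' i = δn (i : ℕ) := by
    intro i
    rw [hδn]
    simp [dif_pos i.isLt]
    intro h; have := i.isLt; omega
  have hoff_eq : ∀ i : Fin (t + 1), offF i = ∑ x ∈ range (i : ℕ), δn x := fun i =>
    Stmt14Aux.filter_lt_sum δ' i
  have hptot : p = ∑ x ∈ range (t + 1), δn x := by
    rw [hpdef, Finset.sum_congr rfl fun i _ => hδnδ' i]
    exact Fin.sum_univ_eq_sum_range δn (t + 1)
  have hblock : ∀ x : Fin p, ∃ i : Fin (t + 1),
      offF i ≤ (x : ℕ) ∧ (x : ℕ) < offF i + δ' i := by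
    intro x
    have hx : (x : ℕ) < ∑ y ∈ range (t + 1), δn y := by rw [← hptot]; exact x.isLt
    obtain ⟨i, hiN, h1, h2⟩ := Stmt14Aux.exists_block δn (t + 1) x hx
    refine ⟨⟨i, hiN⟩, ?_, ?_⟩
    · rw [hoff_eq]; exact h1
    · rw [hoff_eq, hδnδ']; exact h2
  have hFval : ∀ i : Fin (t + 1), F' i = derivative^[(i : ℕ)] P := by
    intro i
    rcases Fin.eq_zero_or_eq_succ i with rfl | ⟨j, rfl⟩
    · rw [hF']; simp
    · rw [hF']; simp [hFf]
  have hit : ∀ i : Fin (t + 1), (i : ℕ) ≤ t := fun i => by have := i.isLt; omega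
  have hF'ne : ∀ i, F' i ≠ 0 := fun i => by
    rw [hFval]; exact (hD _ (le_trans (hit i) htn)).1
  have hF'deg : ∀ i, (F' i).natDegree = n - (i : ℕ) := fun i => by
    rw [hFval]; exact (hD _ (le_trans (hit i) htn)).2
  have hrowdeg : ∀ (i : Fin (t + 1)) (x : Fin p), offF i ≤ (x : ℕ) →
      (x : ℕ) < offF i + δ' i →
      (X ^ (δ' i - 1 - ((x : ℕ) - offF i)) * F' i).natDegree < q := by
    intro i x h1 h2
    have hδpos : 1 ≤ δ' i := by omega
    have hk : δ' i - 1 - ((x : ℕ) - offF i) ≤ δ' i - 1 := by omega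
    rw [natDegree_mul (pow_ne_zero _ X_ne_zero) (hF'ne i), natDegree_X_pow, hF'deg i, hq]
    rcases Fin.eq_zero_or_eq_succ i with rfl | ⟨j, rfl⟩
    · have h3 : δ' 0 = m - 1 := by rw [hδ']; simp [hδ0]
      rw [h3] at hk hδpos
      simp only [Fin.val_zero]
      omega
    · have h3 : δ' j.succ = bar ((j : ℕ) + 1) := by rw [hδ']; simp [hδf]
      have h4 : bar ((j : ℕ) + 1) ≤ m := hbarm _
      have h5 : (j.succ : ℕ) = (j : ℕ) + 1 := rfl
      have h6 : (j : ℕ) + 1 ≤ n := by have := j.isLt; omega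
      rw [h3] at hk hδpos
      rw [h5]
      omega
  have hRP : ∀ x : Fin p, Stmt14Aux.RP MS x = ∑ i : Fin (t + 1),
      if offF i ≤ (x : ℕ) ∧ (x : ℕ) < offF i + δ' i then
        X ^ (δ' i - 1 - ((x : ℕ) - offF i)) * F' i else 0 := by
    intro x
    rw [Stmt14Aux.RP]
    have h1 : ∀ j : Fin q, C (MS x j) * X ^ (q - 1 - (j : ℕ))
        = ∑ i : Fin (t + 1), if offF i ≤ (x : ℕ) ∧ (x : ℕ) < offF i + δ' i then
            C ((X ^ (δ' i - 1 - ((x : ℕ) - offF i)) * F' i).coeff (q - 1 - (j : ℕ)))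
              * X ^ (q - 1 - (j : ℕ)) else 0 := by
      intro j
      rw [hMS]
      simp only [Matrix.of_apply]
      rw [map_sum, Finset.sum_mul]
      refine Finset.sum_congr rfl fun i _ => ?_
      by_cases h : offF i ≤ (x : ℕ) ∧ (x : ℕ) < offF i + δ' i
      · rw [if_pos h, if_pos h]
      · rw [if_neg h, if_neg h, map_zero, zero_mul]
    rw [Finset.sum_congr rfl fun j _ => h1 j, Finset.sum_comm]
    refine Finset.sum_congr rfl fun i _ => ?_
    by_cases h : offF i ≤ (x : ℕ) ∧ (x : ℕ) < offF i + δ' i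
    · simp only [if_pos h]
      exact Stmt14Aux.sum_C_coeff _ (hrowdeg i x h.1 h.2)
    · simp only [if_neg h]
      simp
  have hHRP : ∀ x, H ∣ Stmt14Aux.RP MS x := by
    intro x
    rw [hRP x]
    refine Finset.dvd_sum fun i _ => ?_
    by_cases h : offF i ≤ (x : ℕ) ∧ (x : ℕ) < offF i + δ' i
    · rw [if_pos h]
      exact Dvd.dvd.mul_left (by rw [hFval i]; exact hHdvd _ (hit i)) _
    · rw [if_neg h]; exact dvd_zero _
  have indep : ∀ B : Fin (t + 1) → ℂ[X],
      (∀ i, (B i).natDegree ≤ δ' i - 1) → (∀ i, δ' i = 0 → B i = 0) →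
      (∑ i, B i * F' i) = 0 → ∀ i, B i = 0 := by
    intro B hdeg hzero hsum0
    by_contra hB
    push_neg at hB
    obtain ⟨i₁, hi₁⟩ := hB
    have hSne : (univ.filter (fun i => B i ≠ 0)).Nonempty := ⟨i₁, by simp [hi₁]⟩
    set s := (univ.filter (fun i => B i ≠ 0)).max' hSne with hs
    have hsmem : B s ≠ 0 := (Finset.mem_filter.mp (Finset.max'_mem _ hSne)).2
    have hgt : ∀ i, s < i → B i = 0 := by
      intro i hi
      by_contra h
      exact absurd (Finset.le_max' _ i (by simp [h])) (not_le.mpr hi)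
    have hδs : 1 ≤ δ' s := by
      rcases Nat.eq_zero_or_pos (δ' s) with h | h
      · exact absurd (hzero s h) hsmem
      · exact h
    rcases Fin.eq_zero_or_eq_succ s with hs0 | ⟨j, hsj⟩
    · have h0 : (∑ i, B i * F' i) = B 0 * F' 0 := by
        refine Finset.sum_eq_single 0 (fun i _ hne => ?_) (fun h => absurd (mem_univ _) h)
        rw [hgt i (by rw [hs0]; exact Fin.pos_iff_ne_zero.mpr hne), zero_mul]
      rw [hsum0] at h0
      have h1 : B 0 = 0 := by
        rcases mul_eq_zero.mp h0.symm with h | h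
        · exact h
        · exact absurd h (hF'ne 0)
      rw [← hs0] at h1
      exact hsmem h1
    · have hδs' : δ' s = bar ((j : ℕ) + 1) := by rw [hsj, hδ']; simp [hδf]
      have hsval : (s : ℕ) = (j : ℕ) + 1 := by rw [hsj]; rfl
      have hKdvd : (∏ k ∈ univ.filter (fun k => (j : ℕ) + 1 ≤ μ k), (X - C (r k))) ∣ B s := by
        refine Finset.prod_dvd_of_coprime (fun k _ k' hk' hkk' => ?_) (fun k hk => ?_)
        · exact pairwise_coprime_X_sub_C hr hkk'
        · have hμk : (j : ℕ) + 1 ≤ μ k := (Finset.mem_filter.mp hk).2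
          have hBF : B s * F' s = -∑ i ∈ univ.erase s, B i * F' i := by
            have h2 := Finset.sum_erase_add univ (fun i => B i * F' i) (mem_univ s)
            rw [hsum0] at h2
            exact eq_neg_of_add_eq_zero_right h2
          have hpow : (X - C (r k)) ^ (μ k - ((j : ℕ) + 1) + 1) ∣ B s * F' s := by
            rw [hBF, dvd_neg]
            refine Finset.dvd_sum fun i hi => ?_
            have hine : i ≠ s := (Finset.mem_erase.mp hi).1
            rcases lt_or_gt_of_ne hine with hlt | hgt'
            · have hival : (i : ℕ) < (j : ℕ) + 1 := by
                rw [← hsval]; exact hlt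
              have hidvd : (X - C (r k)) ^ (μ k - ((j : ℕ) + 1) + 1) ∣ F' i := by
                have hrm : rootMultiplicity (r k) (F' i) = μ k - (i : ℕ) := by
                  rw [hFval i]; exact hrootD k _ (by omega)
                refine (pow_dvd_pow _ ?_).trans (pow_rootMultiplicity_dvd _ _)
                rw [hrm]
                omega
              exact hidvd.mul_left _
            · rw [hgt i hgt', zero_mul]
              exact dvd_zero _
          have hBsF : B s * F' s ≠ 0 := mul_ne_zero hsmem (hF'ne s)
          have h6 : μ k - ((j : ℕ) + 1) + 1 ≤ rootMultiplicity (r k) (B s * F' s) :=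
            (le_rootMultiplicity_iff hBsF).mpr hpow
          rw [rootMultiplicity_mul hBsF] at h6
          have h7 : rootMultiplicity (r k) (F' s) = μ k - ((j : ℕ) + 1) := by
            rw [hFval s, hsval]
            exact hrootD k _ hμk
          have h8 : 1 ≤ rootMultiplicity (r k) (B s) := by omega
          have h9 := (pow_dvd_pow (X - C (r k)) h8).trans (pow_rootMultiplicity_dvd (B s) (r k))
          simpa using h9
      have hKdeg : (∏ k ∈ univ.filter (fun k => (j : ℕ) + 1 ≤ μ k),
          (X - C (r k))).natDegree = bar ((j : ℕ) + 1) := by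
        rw [natDegree_prod _ _ (fun k _ => X_sub_C_ne_zero _), hbar]
        simp [natDegree_X_sub_C]
      have h9 : bar ((j : ℕ) + 1) ≤ (B s).natDegree := by
        rw [← hKdeg]
        exact natDegree_le_of_dvd hKdvd hsmem
      have h10 := hdeg s
      rw [hδs'] at h10 hδs
      omega
  set T : Matrix (Fin p) (Fin p) ℂ := Matrix.of fun x c : Fin p => MS x (Fin.castLE hpq c)
    with hT
  have hTdet : T.det ≠ 0 := by
    intro hdet0
    obtain ⟨v, hv, hvT⟩ := Matrix.exists_vecMul_eq_zero_iff.mpr hdet0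
    set Q : ℂ[X] := ∑ x : Fin p, C (v x) * Stmt14Aux.RP MS x with hQ
    have hQcoeff0 : ∀ c : Fin p, Q.coeff (q - 1 - (c : ℕ)) = 0 := by
      intro c
      rw [hQ, finset_sum_coeff]
      have h1 : ∀ x : Fin p, (C (v x) * Stmt14Aux.RP MS x).coeff (q - 1 - (c : ℕ))
          = v x * MS x (Fin.castLE hpq c) := by
        intro x
        rw [coeff_C_mul]
        congr 1
        have h2 := Stmt14Aux.coeff_RP MS x (Fin.castLE hpq c)
        simpa using h2
      rw [Finset.sum_congr rfl fun x _ => h1 x]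
      have h3 := congrFun hvT c
      rw [hT] at h3
      simpa [Matrix.vecMul, dotProduct] using h3
    have hQhigh : ∀ e, q - p ≤ e → Q.coeff e = 0 := by
      intro e he
      by_cases heq : e < q
      · have hcp : q - 1 - e < p := by omega
        have h4 := hQcoeff0 ⟨q - 1 - e, hcp⟩
        rwa [show q - 1 - ((⟨q - 1 - e, hcp⟩ : Fin p) : ℕ) = e by
          show q - 1 - (q - 1 - e) = e
          omega] at h4
      · have hdegQ : Q.natDegree ≤ q - 1 := by
          rw [hQ]
          refine natDegree_sum_le_of_forall_le _ _ fun x _ => ?_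
          refine natDegree_mul_le.trans ?_
          rw [natDegree_C, zero_add]
          exact Stmt14Aux.natDegree_RP_le MS x
        exact coeff_eq_zero_of_natDegree_lt (by omega)
    have hHQ : H ∣ Q := Finset.dvd_sum fun x _ => (hHRP x).mul_left _
    have hQ0 : Q = 0 := by
      by_contra hQne
      have h1 : H.natDegree ≤ Q.natDegree := natDegree_le_of_dvd hHQ hQne
      have h2 : Q.coeff Q.natDegree ≠ 0 := fun h => hQne (leadingCoeff_eq_zero.mp h)
      have h3 : Q.natDegree < q - p := by
        by_contra h4
        exact h2 (hQhigh _ (by omega))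
      omega
    set B : Fin (t + 1) → ℂ[X] := fun i => ∑ x : Fin p,
      if offF i ≤ (x : ℕ) ∧ (x : ℕ) < offF i + δ' i then
        C (v x) * X ^ (δ' i - 1 - ((x : ℕ) - offF i)) else 0 with hB
    have hQB : Q = ∑ i, B i * F' i := by
      rw [hQ]
      rw [Finset.sum_congr rfl fun x _ => by rw [hRP x, Finset.mul_sum]]
      rw [Finset.sum_comm]
      refine Finset.sum_congr rfl fun i _ => ?_
      rw [hB, Finset.sum_mul]
      refine Finset.sum_congr rfl fun x _ => ?_
      by_cases h : offF i ≤ (x : ℕ) ∧ (x : ℕ) < offF i + δ' i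
      · simp only [if_pos h]; ring
      · simp only [if_neg h, mul_zero, zero_mul]
    have hBdeg : ∀ i, (B i).natDegree ≤ δ' i - 1 := by
      intro i
      rw [hB]
      refine natDegree_sum_le_of_forall_le _ _ fun x _ => ?_
      by_cases h : offF i ≤ (x : ℕ) ∧ (x : ℕ) < offF i + δ' i
      · rw [if_pos h]
        refine natDegree_mul_le.trans ?_
        rw [natDegree_C, natDegree_X_pow, zero_add]
        omega
      · rw [if_neg h]; simp
    have hBzero : ∀ i, δ' i = 0 → B i = 0 := by
      intro i h0
      rw [hB]
      refine Finset.sum_eq_zero fun x _ => ?_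
      rw [if_neg]
      rintro ⟨ha1, ha2⟩
      omega
    have hBall := indep B hBdeg hBzero (by rw [← hQB, hQ0])
    apply hv
    funext x
    obtain ⟨i, hi1, hi2⟩ := hblock x
    have hBi := hBall i
    have h5 : (B i).coeff (δ' i - 1 - ((x : ℕ) - offF i)) = v x := by
      rw [hB, finset_sum_coeff]
      refine (Finset.sum_eq_single x ?_ ?_).trans ?_
      · intro y _ hyx
        by_cases h : offF i ≤ (y : ℕ) ∧ (y : ℕ) < offF i + δ' i
        · rw [if_pos h, coeff_C_mul, coeff_X_pow, if_neg, mul_zero]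
          intro hcontra
          exact hyx (Fin.ext (by omega))
        · rw [if_neg h]; exact coeff_zero _
      · intro h; exact absurd (mem_univ _) h
      · rw [if_pos ⟨hi1, hi2⟩, coeff_C_mul, coeff_X_pow, if_pos rfl, mul_one]
    rw [hBi] at h5
    simpa using h5.symm
  have hdvdDP : H ∣ detPoly MS := Stmt14Aux.dvd_detPoly hp1 hpq MS hHRP
  have hdegDP : (detPoly MS).natDegree ≤ q - p := Stmt14Aux.natDegree_detPoly_le hp1 hpq MS
  have hcoeffDP : (detPoly MS).coeff (q - p) = T.det := by
    rw [Stmt14Aux.coeff_detPoly hp1 hpq MS, hT]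
  obtain ⟨u, hu⟩ := hdvdDP
  have hDPne : detPoly MS ≠ 0 := by
    intro h0
    rw [h0, coeff_zero] at hcoeffDP
    exact hTdet hcoeffDP.symm
  have hune : u ≠ 0 := fun h => hDPne (by rw [hu, h, mul_zero])
  have hudeg : u.natDegree = 0 := by
    have h1 := natDegree_mul hHne hune
    rw [← hu] at h1
    omega
  obtain ⟨c₀, hc₀, hgcdeq⟩ := hgcd
  refine ⟨u.coeff 0 * c₀⁻¹, ?_, ?_⟩
  · refine mul_ne_zero (fun h => hune ?_) (inv_ne_zero hc₀)
    rw [eq_C_of_natDegree_eq_zero hudeg, h, map_zero]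
  · rw [hsubres, hu, hgcdeq]
    have h2 : (C (u.coeff 0 * c₀⁻¹) : ℂ[X]) * (C c₀ * H) = C (u.coeff 0) * H := by
      rw [← mul_assoc, ← C_mul]
      congr 2
      field_simp
    rw [h2]
    conv_lhs => rw [eq_C_of_natDegree_eq_zero hudeg]
    ring
end
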